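/- arXiv:2605.00375 — 3 statements merged into one kernel-verified Lean document; each statement's English description precedes it below -/
import Mathlib

section
/- For centered probability measures with finite second moment, the supremum over k-dimensional subspaces α of the Fourier metric d_2 between the projections P_α μ and P_α ν equals d_2(μ, ν); i.e. sup_{α ∈ G_{k,d}} d_2(P_α μ, P_α ν) = d_2(μ, ν). -/
open MeasureTheory

noncomputable section

/-- The Fourier transform `μ̂(ξ) = ∫ e^{-i x·ξ} dμ(x)` of a measure on a real
inner product space. -/
def fourierT {F : Type*} [NormedAddCommGroup F] [InnerProductSpace ℝ F] [MeasurableSpace F]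
    (μ : Measure F) (ξ : F) : ℂ :=
  ∫ x, Complex.exp (-Complex.I * ((inner ℝ x ξ : ℝ) : ℂ)) ∂μ

/-- The Fourier metric `d₂(μ,ν) = sup_{ξ ≠ 0} |μ̂(ξ) - ν̂(ξ)| / |ξ|²`. -/
def fourierDist2 {F : Type*} [NormedAddCommGroup F] [InnerProductSpace ℝ F] [MeasurableSpace F]
    (μ ν : Measure F) : ℝ :=
  ⨆ ξ : {ξ : F // ξ ≠ 0}, ‖fourierT μ ξ - fourierT ν ξ‖ / ‖(ξ : F)‖ ^ 2

/-- Bound `|e^{-it} - 1 + it| ≤ 3 t²` for all real `t`. -/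
theorem norm_exp_neg_I_mul_sub_one_add_le (t : ℝ) :
    ‖Complex.exp (-Complex.I * t) - 1 + Complex.I * t‖ ≤ 3 * t ^ 2 := by
  have h0 : Complex.exp (-Complex.I * t) - 1 + Complex.I * t
      = Complex.exp (-Complex.I * t) - 1 - (-Complex.I * t) := by ring
  have hnz : ‖(-Complex.I * (t:ℂ))‖ = |t| := by
    simp [norm_mul]
  rw [h0]
  rcases le_or_gt (|t|) 1 with h | h
  · have := Complex.norm_exp_sub_one_sub_id_le (x := -Complex.I * t)
      (by rwa [hnz])
    calc ‖Complex.exp (-Complex.I * t) - 1 - (-Complex.I * t)‖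
        ≤ ‖(-Complex.I * (t:ℂ))‖ ^ 2 := by exact this
      _ = t ^ 2 := by rw [hnz, _root_.sq_abs]
      _ ≤ 3 * t ^ 2 := by nlinarith [sq_nonneg t]
  · have he : ‖Complex.exp (-Complex.I * t)‖ = 1 := by
      rw [Complex.norm_exp]
      simp
    have : ‖Complex.exp (-Complex.I * t) - 1 - (-Complex.I * t)‖
        ≤ ‖Complex.exp (-Complex.I * t)‖ + 1 + ‖(-Complex.I * (t:ℂ))‖ := by
      refine (norm_sub_le _ _).trans ?_
      gcongr
      refine (norm_sub_le _ _).trans ?_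
      simp
    rw [he, hnz] at this
    have h2 : |t| ≤ t ^ 2 := by nlinarith [abs_nonneg t, _root_.sq_abs t]
    nlinarith [_root_.sq_abs t, abs_nonneg t]

/-- For a centered probability measure with finite second moment,
`|μ̂(ξ) - 1| ≤ 3 (∫‖x‖²) ‖ξ‖²`. -/
theorem norm_fourierT_sub_one_le {F : Type*} [NormedAddCommGroup F] [InnerProductSpace ℝ F]
    [MeasurableSpace F] [OpensMeasurableSpace F] [CompleteSpace F] [SecondCountableTopology F]
    (μ : Measure F) [IsProbabilityMeasure μ]
    (h2 : Integrable (fun x => ‖x‖ ^ 2) μ) (hb : ∫ x, x ∂μ = 0) (ξ : F) :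
    ‖fourierT μ ξ - 1‖ ≤ (3 * ∫ x, ‖x‖ ^ 2 ∂μ) * ‖ξ‖ ^ 2 := by
  have hxint : Integrable (fun x : F => x) μ := by
    refine Integrable.mono' ((integrable_const 1).add h2) aestronglyMeasurable_id
      (Filter.Eventually.of_forall fun x => ?_)
    show ‖x‖ ≤ ((fun _ : F => (1:ℝ)) + fun x : F => ‖x‖ ^ 2) x
    simp only [Pi.add_apply]
    nlinarith [sq_nonneg (‖x‖ - 1), norm_nonneg x]
  have hinner : Integrable (fun x : F => (inner ℝ x ξ : ℝ)) μ := by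
    have := ((innerSL ℝ (E := F)).flip ξ).integrable_comp hxint
    simpa only [ContinuousLinearMap.flip_apply, innerSL_apply_apply] using this
  have hinner0 : ∫ x, (inner ℝ x ξ : ℝ) ∂μ = 0 := by
    have : (fun x : F => (inner ℝ x ξ : ℝ)) = fun x => (inner ℝ ξ x : ℝ) := by
      funext x; exact real_inner_comm ξ x
    rw [this, integral_inner hxint, hb, inner_zero_right]
  have hcont : Continuous fun x : F => Complex.exp (-Complex.I * ((inner ℝ x ξ : ℝ) : ℂ)) :=
    Complex.continuous_exp.comp (continuous_const.mul
      (Complex.continuous_ofReal.comp (continuous_id.inner continuous_const)))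
  have hg : Integrable (fun x : F => Complex.exp (-Complex.I * ((inner ℝ x ξ : ℝ) : ℂ))) μ := by
    refine Integrable.mono' (integrable_const 1) hcont.aestronglyMeasurable
      (Filter.Eventually.of_forall fun x => ?_)
    rw [Complex.norm_exp]
    simp
  have hIinner : Integrable (fun x : F => Complex.I * ((inner ℝ x ξ : ℝ) : ℂ)) μ :=
    hinner.ofReal.const_mul Complex.I
  have hgs : Integrable (fun x : F => Complex.exp (-Complex.I * ((inner ℝ x ξ : ℝ) : ℂ)) - 1) μ :=
    hg.sub (integrable_const 1)
  have hsplit : fourierT μ ξ - 1 =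
      ∫ x, (Complex.exp (-Complex.I * ((inner ℝ x ξ : ℝ) : ℂ)) - 1
        + Complex.I * ((inner ℝ x ξ : ℝ) : ℂ)) ∂μ := by
    rw [integral_add hgs hIinner,
      integral_sub hg (integrable_const 1), integral_const]
    have : ∫ x, Complex.I * ((inner ℝ x ξ : ℝ) : ℂ) ∂μ = 0 := by
      rw [integral_const_mul]
      have : ∫ x, ((inner ℝ x ξ : ℝ) : ℂ) ∂μ = ((∫ x, (inner ℝ x ξ : ℝ) ∂μ : ℝ) : ℂ) :=
        integral_ofReal
      rw [this, hinner0]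
      simp
    rw [this]
    simp [fourierT]
  rw [hsplit]
  calc ‖∫ x, (Complex.exp (-Complex.I * ((inner ℝ x ξ : ℝ) : ℂ)) - 1
        + Complex.I * ((inner ℝ x ξ : ℝ) : ℂ)) ∂μ‖
      ≤ ∫ x, ‖Complex.exp (-Complex.I * ((inner ℝ x ξ : ℝ) : ℂ)) - 1
        + Complex.I * ((inner ℝ x ξ : ℝ) : ℂ)‖ ∂μ := norm_integral_le_integral_norm _
    _ ≤ ∫ x, (3 * ‖ξ‖ ^ 2) * ‖x‖ ^ 2 ∂μ := by
        refine integral_mono_of_nonneg (Filter.Eventually.of_forall fun x => norm_nonneg _)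
          (h2.const_mul _) (Filter.Eventually.of_forall fun x => ?_)
        refine (norm_exp_neg_I_mul_sub_one_add_le (inner ℝ x ξ)).trans ?_
        have h1 : |(inner ℝ x ξ : ℝ)| ≤ ‖x‖ * ‖ξ‖ := abs_real_inner_le_norm x ξ
        have hsq : (inner ℝ x ξ : ℝ) ^ 2 ≤ (‖x‖ * ‖ξ‖) ^ 2 := by
          nlinarith [_root_.sq_abs (inner ℝ x ξ : ℝ), abs_nonneg (inner ℝ x ξ : ℝ)]
        show 3 * (inner ℝ x ξ : ℝ) ^ 2 ≤ 3 * ‖ξ‖ ^ 2 * ‖x‖ ^ 2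
        nlinarith [hsq]
    _ = (3 * ∫ x, ‖x‖ ^ 2 ∂μ) * ‖ξ‖ ^ 2 := by
        rw [integral_const_mul]; ring

/-- Fourier–slice: the Fourier transform of the projected measure agrees with that of
the original measure on the orthogonal complement. -/
theorem fourierT_map_orthogonalProjection {d : ℕ} (μ : Measure (EuclideanSpace ℝ (Fin d)))
    (K : Submodule ℝ (EuclideanSpace ℝ (Fin d))) (ξ : ↥Kᗮ) :
    fourierT (μ.map (fun x => Submodule.orthogonalProjection Kᗮ x)) ξ
      = fourierT μ (ξ : EuclideanSpace ℝ (Fin d)) := by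
  have hre : ∀ x : EuclideanSpace ℝ (Fin d),
      (inner ℝ (Submodule.orthogonalProjection Kᗮ x) ξ : ℝ) = (inner ℝ x (ξ : EuclideanSpace ℝ (Fin d)) : ℝ) := by
    intro x
    rw [Submodule.coe_inner]
    have h2 : x - (Submodule.orthogonalProjection Kᗮ x : EuclideanSpace ℝ (Fin d)) ∈ Kᗮᗮ :=
      Submodule.sub_starProjection_mem_orthogonal (K := Kᗮ) x
    have h3 : (inner ℝ (x - (Submodule.orthogonalProjection Kᗮ x : EuclideanSpace ℝ (Fin d)))
        (ξ : EuclideanSpace ℝ (Fin d)) : ℝ) = 0 := by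
      have := h2 (ξ : EuclideanSpace ℝ (Fin d)) ξ.2
      rw [real_inner_comm] at this
      exact this
    rw [inner_sub_left] at h3
    linarith
  unfold fourierT
  rw [integral_map]
  · simp only [hre]
  · exact ((Submodule.orthogonalProjection Kᗮ).continuous.measurable).aemeasurable
  · exact (Complex.continuous_exp.comp (continuous_const.mul
      (Complex.continuous_ofReal.comp (continuous_id.inner continuous_const)))).aestronglyMeasurable

/-- Every nonzero vector lies in the orthogonal complement of some `k`-dimensional subspace. -/
theorem exists_finrank_eq_mem_orthogonal {d k : ℕ} (hk : 1 ≤ k) (hkd : k ≤ d - 1)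
    {ξ : EuclideanSpace ℝ (Fin d)} (hξ : ξ ≠ 0) :
    ∃ α : Submodule ℝ (EuclideanSpace ℝ (Fin d)), Module.finrank ℝ α = k ∧ ξ ∈ αᗮ := by
  have hd : Module.finrank ℝ (EuclideanSpace ℝ (Fin d)) = d := finrank_euclideanSpace_fin
  set W : Submodule ℝ (EuclideanSpace ℝ (Fin d)) := (ℝ ∙ ξ)ᗮ with hW
  have hfr : Module.finrank ℝ W = d - 1 := by
    have h1 : Module.finrank ℝ (ℝ ∙ ξ) = 1 := finrank_span_singleton hξ
    have h2 := Submodule.finrank_add_finrank_orthogonal (K := (ℝ ∙ ξ))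
    rw [h1, hd] at h2
    rw [hW]
    omega
  have hdk : k ≤ Module.finrank ℝ W := by omega
  obtain ⟨s, hcard, hli⟩ := exists_finset_linearIndependent_of_le_finrank
    (R := ℝ) (M := ↥W) (n := k) hdk
  refine ⟨(Submodule.span ℝ (s : Set ↥W)).map W.subtype, ?_, ?_⟩
  · rw [Submodule.finrank_map_subtype_eq, finrank_span_finset_eq_card]
    · exact hcard
    · exact hli
  · intro u hu
    obtain ⟨v, hv, rfl⟩ := hu
    have := v.2 ξ (Submodule.mem_span_singleton_self ξ)
    rwa [real_inner_comm] at this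

/-- For centered probability measures with finite second moment, the supremum over
`k`-dimensional subspaces `α` of the Fourier metric `d₂` between the projections
`P_α μ` and `P_α ν` equals `d₂(μ,ν)`. -/
theorem sup_fourierDist2_proj_eq (d k : ℕ) (hk : 1 ≤ k) (hkd : k ≤ d - 1)
    (μ ν : Measure (EuclideanSpace ℝ (Fin d)))
    [IsProbabilityMeasure μ] [IsProbabilityMeasure ν]
    (h2μ : Integrable (fun x => ‖x‖ ^ 2) μ) (h2ν : Integrable (fun x => ‖x‖ ^ 2) ν)
    (hbμ : ∫ x, x ∂μ = 0) (hbν : ∫ x, x ∂ν = 0) :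
    (⨆ α : {α : Submodule ℝ (EuclideanSpace ℝ (Fin d)) // Module.finrank ℝ α = k},
        fourierDist2 (μ.map (fun x => Submodule.orthogonalProjection (α : Submodule ℝ (EuclideanSpace ℝ (Fin d)))ᗮ x))
          (ν.map (fun x => Submodule.orthogonalProjection (α : Submodule ℝ (EuclideanSpace ℝ (Fin d)))ᗮ x)))
      = fourierDist2 μ ν := by
  have hd2 : 2 ≤ d := by omega
  set E := EuclideanSpace ℝ (Fin d)
  set C : ℝ := (3 * ∫ x, ‖x‖ ^ 2 ∂μ) + (3 * ∫ x, ‖x‖ ^ 2 ∂ν) with hC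
  have hC0 : 0 ≤ C := by
    have h1 : 0 ≤ ∫ x, ‖x‖ ^ 2 ∂μ := integral_nonneg fun x => sq_nonneg _
    have h2 : 0 ≤ ∫ x, ‖x‖ ^ 2 ∂ν := integral_nonneg fun x => sq_nonneg _
    positivity
  -- uniform bound on the Fourier quotient
  have hbound : ∀ ξ : E, ξ ≠ 0 → ‖fourierT μ ξ - fourierT ν ξ‖ / ‖ξ‖ ^ 2 ≤ C := by
    intro ξ hξ
    have h1 := norm_fourierT_sub_one_le μ h2μ hbμ ξ
    have h2 := norm_fourierT_sub_one_le ν h2ν hbν ξ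
    have hnum : ‖fourierT μ ξ - fourierT ν ξ‖ ≤ C * ‖ξ‖ ^ 2 := by
      have : fourierT μ ξ - fourierT ν ξ = (fourierT μ ξ - 1) - (fourierT ν ξ - 1) := by ring
      rw [this]
      refine (norm_sub_le _ _).trans ?_
      rw [hC]
      nlinarith [sq_nonneg ‖ξ‖]
    have hn : (0:ℝ) < ‖ξ‖ := norm_pos_iff.mpr hξ
    have hpos : (0:ℝ) < ‖ξ‖ ^ 2 := by positivity
    rw [div_le_iff₀ hpos]
    linarith [hnum]
  -- transfer identity for projected measures
  have htrans : ∀ (α : Submodule ℝ E) (ξ : ↥αᗮ),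
      ‖fourierT (μ.map (fun x => Submodule.orthogonalProjection αᗮ x)) ξ
          - fourierT (ν.map (fun x => Submodule.orthogonalProjection αᗮ x)) ξ‖ / ‖ξ‖ ^ 2
        = ‖fourierT μ (ξ : E) - fourierT ν (ξ : E)‖ / ‖(ξ : E)‖ ^ 2 := by
    intro α ξ
    rw [fourierT_map_orthogonalProjection μ α ξ, fourierT_map_orthogonalProjection ν α ξ,
      Submodule.coe_norm]
  -- a nonzero vector exists
  obtain ⟨ξ₀, hξ₀⟩ : ∃ ξ : E, ξ ≠ 0 := by
    refine ⟨EuclideanSpace.single (⟨0, by omega⟩ : Fin d) (1:ℝ), fun h => ?_⟩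
    have := congrArg (fun v : E => v (⟨0, by omega⟩ : Fin d)) h
    simp only [EuclideanSpace.single_apply, if_pos rfl] at this
    exact one_ne_zero (α := ℝ) (this.trans rfl)
  have hne : Nonempty {ξ : E // ξ ≠ 0} := ⟨⟨ξ₀, hξ₀⟩⟩
  -- nonnegativity of both sides
  have hd2nonneg : ∀ {F : Type} [NormedAddCommGroup F] [InnerProductSpace ℝ F]
      [MeasurableSpace F] (ρ σ : Measure F), 0 ≤ fourierDist2 ρ σ := by
    intro F _ _ _ ρ σ
    exact Real.iSup_nonneg fun ξ => div_nonneg (norm_nonneg _) (sq_nonneg _)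
  -- bound on fourierDist2 μ ν and BddAbove of its defining range
  have hbddE : BddAbove (Set.range fun ξ : {ξ : E // ξ ≠ 0} =>
      ‖fourierT μ ξ - fourierT ν ξ‖ / ‖(ξ : E)‖ ^ 2) := by
    refine ⟨C, ?_⟩
    rintro x ⟨ξ, rfl⟩
    exact hbound ξ ξ.2
  -- bound for projected distances
  have hproj_le : ∀ α : Submodule ℝ E,
      fourierDist2 (μ.map (fun x => Submodule.orthogonalProjection αᗮ x))
        (ν.map (fun x => Submodule.orthogonalProjection αᗮ x)) ≤ C := by
    intro α
    refine Real.iSup_le (fun ξ => ?_) hC0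
    exact le_of_eq_of_le (htrans α ξ)
      (hbound (ξ : E) (fun h => ξ.2 (Subtype.ext (by exact_mod_cast h))))
  apply le_antisymm
  · refine Real.iSup_le (fun α => ?_) (hd2nonneg μ ν)
    refine Real.iSup_le (fun ξ => ?_) (hd2nonneg μ ν)
    have hξne : ((ξ : ↥(α : Submodule ℝ E)ᗮ) : E) ≠ 0 :=
      fun h => ξ.2 (Subtype.ext (by exact_mod_cast h))
    exact le_of_eq_of_le (htrans (α : Submodule ℝ E) ξ)
      (le_ciSup hbddE ⟨((ξ : ↥(α : Submodule ℝ E)ᗮ) : E), hξne⟩)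
  · have hLHS0 : 0 ≤ ⨆ α : {α : Submodule ℝ E // Module.finrank ℝ α = k},
        fourierDist2 (μ.map (fun x => Submodule.orthogonalProjection (α : Submodule ℝ E)ᗮ x))
          (ν.map (fun x => Submodule.orthogonalProjection (α : Submodule ℝ E)ᗮ x)) :=
      Real.iSup_nonneg fun α => hd2nonneg _ _
    refine Real.iSup_le (fun ξ => ?_) hLHS0
    obtain ⟨α, hα, hmem⟩ := exists_finrank_eq_mem_orthogonal hk hkd ξ.2
    have hξα : (⟨(ξ : E), hmem⟩ : ↥αᗮ) ≠ 0 :=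
      fun h => ξ.2 (by simpa [Submodule.mk_eq_zero] using h)
    have step1 : ‖fourierT μ (ξ : E) - fourierT ν (ξ : E)‖ / ‖(ξ : E)‖ ^ 2
        ≤ fourierDist2 (μ.map (fun x => Submodule.orthogonalProjection αᗮ x))
            (ν.map (fun x => Submodule.orthogonalProjection αᗮ x)) := by
      have hbdd : BddAbove (Set.range fun η : {η : ↥αᗮ // η ≠ 0} =>
          ‖fourierT (μ.map (fun x => Submodule.orthogonalProjection αᗮ x)) η
            - fourierT (ν.map (fun x => Submodule.orthogonalProjection αᗮ x)) η‖ / ‖(η : ↥αᗮ)‖ ^ 2) := by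
        refine ⟨C, ?_⟩
        rintro x ⟨η, rfl⟩
        exact le_of_eq_of_le (htrans α η)
          (hbound ((η : ↥αᗮ) : E) (fun h => η.2 (Subtype.ext (by exact_mod_cast h))))
      exact le_of_eq_of_le (htrans α ⟨(ξ : E), hmem⟩).symm
        (le_ciSup hbdd (⟨⟨(ξ : E), hmem⟩, hξα⟩ : {η : ↥αᗮ // η ≠ 0}))
    refine step1.trans ?_
    have hbddα : BddAbove (Set.range fun α : {α : Submodule ℝ E // Module.finrank ℝ α = k} =>
        fourierDist2 (μ.map (fun x => Submodule.orthogonalProjection (α : Submodule ℝ E)ᗮ x))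
          (ν.map (fun x => Submodule.orthogonalProjection (α : Submodule ℝ E)ᗮ x))) := by
      refine ⟨C, ?_⟩
      rintro x ⟨β, rfl⟩
      exact hproj_le (β : Submodule ℝ E)
    exact le_ciSup hbddα (⟨α, hα⟩ : {α : Submodule ℝ E // Module.finrank ℝ α = k})
end
end

section
/- Bi-Lipschitz stability of the k-plane transform in the generalized Fourier metric: for positive Radon measures μ, ν on ℝ^d with finite second moments and positive total mass, (1/2) d̃_2(μ,ν) ≤ D(Pμ, Pν) ≤ d̃_2(μ,ν), where D(Pμ,Pν) := sup_{α ∈ G_{k,d}} d̃_2(P_α μ, P_α ν). -/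
open MeasureTheory

noncomputable section

/-- The barycenter `m⃗_μ = (1/M_μ) ∫ x dμ(x)`. -/
def bary {F : Type*} [NormedAddCommGroup F] [NormedSpace ℝ F] [MeasurableSpace F]
    (μ : Measure F) : F :=
  ((μ Set.univ).toReal)⁻¹ • ∫ x, x ∂μ

/-- The centered normalization `μ̄₀ = (1/M_μ) T_{m⃗_μ} μ`. -/
def centerNorm {F : Type*} [NormedAddCommGroup F] [NormedSpace ℝ F] [MeasurableSpace F]
    (μ : Measure F) : Measure F :=
  (μ Set.univ)⁻¹ • μ.map (fun x => x - bary μ)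

/-- The generalized Fourier metric
`d̃₂(μ,ν) = d₂(μ̄₀, ν̄₀) + |m⃗_μ - m⃗_ν| + |M_μ - M_ν|`. -/
def fourierDistTilde2 {F : Type*} [NormedAddCommGroup F] [InnerProductSpace ℝ F]
    [MeasurableSpace F] (μ ν : Measure F) : ℝ :=
  fourierDist2 (centerNorm μ) (centerNorm ν) + ‖bary μ - bary ν‖
    + |(μ Set.univ).toReal - (ν Set.univ).toReal|

/-! ### Auxiliary lemmas -/

open Module Complex

set_option linter.unusedSectionVars false

lemma exp_taylor2 (θ : ℝ) : ‖Complex.exp (θ * I) - 1 - θ * I‖ ≤ 3 * θ ^ 2 := by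
  rcases le_or_gt |θ| 1 with h | h
  · have hz : ‖(θ : ℂ) * I‖ ≤ 1 := by
      rwa [norm_mul, Complex.norm_I, mul_one, Complex.norm_real, Real.norm_eq_abs]
    have hb := Complex.exp_bound hz (n := 2) (by norm_num)
    have hsum : (∑ i ∈ Finset.range 2, (θ * I : ℂ) ^ i / i.factorial) = 1 + θ * I := by
      simp [Finset.sum_range_succ]
    rw [hsum] at hb
    have habs : ‖(θ : ℂ) * I‖ ^ 2 = θ ^ 2 := by
      rw [norm_mul, Complex.norm_I, mul_one, Complex.norm_real, Real.norm_eq_abs, _root_.sq_abs]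
    have heq : Complex.exp (θ * I) - 1 - θ * I = Complex.exp (θ * I) - (1 + θ * I) := by ring
    rw [heq]
    calc ‖Complex.exp (θ * I) - (1 + θ * I)‖
        ≤ ‖(θ : ℂ) * I‖ ^ 2 * ((2 : ℕ).succ * ((Nat.factorial 2 : ℝ) * (2:ℝ))⁻¹) := by
          exact_mod_cast hb
      _ ≤ 3 * θ ^ 2 := by
          rw [habs, Nat.factorial]; norm_num
          nlinarith [sq_nonneg θ]
  · have h1 : ‖Complex.exp (θ * I)‖ = 1 := by
      simpa using Complex.norm_exp_ofReal_mul_I θ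
    have h2 : ‖(θ : ℂ) * I‖ = |θ| := by
      rw [norm_mul, Complex.norm_real, Complex.norm_I, mul_one,
        Real.norm_eq_abs]
    calc ‖Complex.exp (θ * I) - 1 - θ * I‖
        ≤ ‖Complex.exp (θ * I) - 1‖ + ‖(θ:ℂ) * I‖ := norm_sub_le _ _
      _ ≤ (‖Complex.exp (θ * I)‖ + ‖(1:ℂ)‖) + |θ| := by rw [h2]; gcongr; exact norm_sub_le _ _
      _ = 2 + |θ| := by rw [h1]; norm_num
      _ ≤ 3 * θ ^ 2 := by nlinarith [_root_.sq_abs θ, abs_nonneg θ]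

section Lemmas
variable {F : Type*} [NormedAddCommGroup F] [InnerProductSpace ℝ F] [MeasurableSpace F]
  [BorelSpace F] [SecondCountableTopology F] [CompleteSpace F]
  {E : Type*} [NormedAddCommGroup E] [InnerProductSpace ℝ E] [MeasurableSpace E]
  [BorelSpace E] [SecondCountableTopology E] [CompleteSpace E]

lemma norm_le_one_add_sq (x : F) : ‖x‖ ≤ 1 + ‖x‖ ^ 2 := by
  nlinarith [sq_nonneg (‖x‖ - 1), norm_nonneg x]

lemma integrable_id_of_sq {ρ : Measure F} [IsFiniteMeasure ρ]
    (h2 : Integrable (fun x => ‖x‖ ^ 2) ρ) : Integrable (fun x : F => x) ρ := by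
  refine Integrable.mono' (g := fun x => (1 : ℝ) + ‖x‖ ^ 2)
    ((integrable_const 1).add h2) continuous_id.aestronglyMeasurable ?_
  exact Filter.Eventually.of_forall fun x => norm_le_one_add_sq x

lemma fourierT_sub_one_bound (ρ : Measure F) [IsProbabilityMeasure ρ]
    (h2 : Integrable (fun x => ‖x‖ ^ 2) ρ) (hb : ∫ x, x ∂ρ = 0) (ξ : F) :
    ‖fourierT ρ ξ - 1‖ ≤ 3 * (∫ x, ‖x‖ ^ 2 ∂ρ) * ‖ξ‖ ^ 2 := by
  have hid : Integrable (fun x : F => x) ρ := integrable_id_of_sq h2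
  have hc : Continuous fun x : F => (inner ℝ x ξ : ℝ) := continuous_id.inner continuous_const
  set g : F → ℂ := fun x => Complex.exp (-Complex.I * ((inner ℝ x ξ : ℝ) : ℂ)) - 1
      + ((inner ℝ x ξ : ℝ) : ℂ) * I with hg
  have hgbound : ∀ x, ‖g x‖ ≤ (3 * ‖ξ‖ ^ 2) * ‖x‖ ^ 2 := by
    intro x
    have h1 : g x = Complex.exp ((-(inner ℝ x ξ : ℝ) : ℝ) * I) - 1
        - ((-(inner ℝ x ξ : ℝ) : ℝ) : ℂ) * I := by
      simp only [hg]; push_cast; ring_nf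
    rw [h1]
    calc ‖Complex.exp ((-(inner ℝ x ξ : ℝ) : ℝ) * I) - 1 - ((-(inner ℝ x ξ : ℝ):ℝ) : ℂ) * I‖
        ≤ 3 * (-(inner ℝ x ξ : ℝ)) ^ 2 := exp_taylor2 _
      _ = 3 * (inner ℝ x ξ : ℝ) ^ 2 := by ring
      _ ≤ 3 * (‖x‖ * ‖ξ‖) ^ 2 := by
          have h := abs_real_inner_le_norm x ξ
          nlinarith [abs_nonneg (inner ℝ x ξ : ℝ), _root_.sq_abs (inner ℝ x ξ : ℝ)]
      _ = (3 * ‖ξ‖ ^ 2) * ‖x‖ ^ 2 := by ring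
  have hce : Continuous fun x : F => Complex.exp (-Complex.I * ((inner ℝ x ξ : ℝ) : ℂ)) :=
    Complex.continuous_exp.comp (continuous_const.mul (Complex.continuous_ofReal.comp hc))
  have hgc : Continuous g := by
    exact (hce.sub continuous_const).add ((Complex.continuous_ofReal.comp hc).mul continuous_const)
  have hgi : Integrable g ρ :=
    Integrable.mono' (h2.const_mul _) hgc.aestronglyMeasurable
      (Filter.Eventually.of_forall hgbound)
  have hinner : (∫ x, (inner ℝ x ξ : ℝ) ∂ρ) = 0 := by
    have h1 : (∫ x, (innerSL ℝ ξ) x ∂ρ) = (innerSL ℝ ξ) (∫ x, x ∂ρ) :=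
      ContinuousLinearMap.integral_comp_comm _ hid
    rw [hb] at h1
    simp only [innerSL_apply_apply, map_zero] at h1
    calc (∫ x, (inner ℝ x ξ : ℝ) ∂ρ) = ∫ x, (inner ℝ ξ x : ℝ) ∂ρ := by
          simp_rw [real_inner_comm]
      _ = 0 := h1
  have hexpi : Integrable (fun x => Complex.exp (-Complex.I * ((inner ℝ x ξ : ℝ) : ℂ))) ρ := by
    refine Integrable.mono' (g := fun _ => (1:ℝ)) (integrable_const 1)
      hce.aestronglyMeasurable (Filter.Eventually.of_forall fun x => ?_)
    rw [Complex.norm_exp]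
    simp
  have hinnerR : Integrable (fun x => (inner ℝ x ξ : ℝ)) ρ := by
    refine Integrable.mono' (g := fun x => ‖ξ‖ * ‖x‖) (hid.norm.const_mul _)
      hc.aestronglyMeasurable (Filter.Eventually.of_forall fun x => ?_)
    simpa [Real.norm_eq_abs, mul_comm] using abs_real_inner_le_norm x ξ
  have hinneri : Integrable (fun x => ((inner ℝ x ξ : ℝ) : ℂ) * I) ρ := hinnerR.ofReal.mul_const I
  have hstep1 : ∫ x, g x ∂ρ
      = (∫ x, (Complex.exp (-Complex.I * ((inner ℝ x ξ : ℝ) : ℂ)) - 1) ∂ρ)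
        + ∫ x, ((inner ℝ x ξ : ℝ) : ℂ) * I ∂ρ :=
    integral_add (hexpi.sub (integrable_const 1)) hinneri
  have hstep2 : (∫ x, (Complex.exp (-Complex.I * ((inner ℝ x ξ : ℝ) : ℂ)) - 1) ∂ρ)
      = fourierT ρ ξ - 1 := by
    rw [integral_sub hexpi (integrable_const 1)]
    simp [fourierT]
  have hstep3 : (∫ x, ((inner ℝ x ξ : ℝ) : ℂ) * I ∂ρ) = 0 := by
    rw [integral_mul_const]
    have : (∫ x, ((inner ℝ x ξ : ℝ) : ℂ) ∂ρ) = ((∫ x, (inner ℝ x ξ : ℝ) ∂ρ : ℝ) : ℂ) :=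
      integral_ofReal
    rw [this, hinner]
    simp
  have hgint : ∫ x, g x ∂ρ = fourierT ρ ξ - 1 := by rw [hstep1, hstep2, hstep3, add_zero]
  calc ‖fourierT ρ ξ - 1‖ = ‖∫ x, g x ∂ρ‖ := by rw [hgint]
    _ ≤ ∫ x, ‖g x‖ ∂ρ := norm_integral_le_integral_norm _
    _ ≤ ∫ x, (3 * ‖ξ‖ ^ 2) * ‖x‖ ^ 2 ∂ρ := integral_mono hgi.norm (h2.const_mul _) hgbound
    _ = 3 * (∫ x, ‖x‖ ^ 2 ∂ρ) * ‖ξ‖ ^ 2 := by rw [integral_const_mul]; ring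

lemma fourierT_sub_bound (ρ σ : Measure F) [IsProbabilityMeasure ρ] [IsProbabilityMeasure σ]
    (h2ρ : Integrable (fun x => ‖x‖ ^ 2) ρ) (h2σ : Integrable (fun x => ‖x‖ ^ 2) σ)
    (hbρ : ∫ x, x ∂ρ = 0) (hbσ : ∫ x, x ∂σ = 0) (ξ : F) :
    ‖fourierT ρ ξ - fourierT σ ξ‖
      ≤ (3 * (∫ x, ‖x‖ ^ 2 ∂ρ) + 3 * (∫ x, ‖x‖ ^ 2 ∂σ)) * ‖ξ‖ ^ 2 := by
  calc ‖fourierT ρ ξ - fourierT σ ξ‖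
      = ‖(fourierT ρ ξ - 1) - (fourierT σ ξ - 1)‖ := by ring_nf
    _ ≤ ‖fourierT ρ ξ - 1‖ + ‖fourierT σ ξ - 1‖ := norm_sub_le _ _
    _ ≤ 3 * (∫ x, ‖x‖ ^ 2 ∂ρ) * ‖ξ‖ ^ 2 + 3 * (∫ x, ‖x‖ ^ 2 ∂σ) * ‖ξ‖ ^ 2 := by
        gcongr <;> [exact fourierT_sub_one_bound ρ h2ρ hbρ ξ;
          exact fourierT_sub_one_bound σ h2σ hbσ ξ]
    _ = _ := by ring

lemma fquot_le (ρ σ : Measure F) [IsProbabilityMeasure ρ] [IsProbabilityMeasure σ]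
    (h2ρ : Integrable (fun x => ‖x‖ ^ 2) ρ) (h2σ : Integrable (fun x => ‖x‖ ^ 2) σ)
    (hbρ : ∫ x, x ∂ρ = 0) (hbσ : ∫ x, x ∂σ = 0) (ξ : F) (hξ : ξ ≠ 0) :
    ‖fourierT ρ ξ - fourierT σ ξ‖ / ‖ξ‖ ^ 2
      ≤ 3 * (∫ x, ‖x‖ ^ 2 ∂ρ) + 3 * (∫ x, ‖x‖ ^ 2 ∂σ) := by
  rw [div_le_iff₀ (pow_pos (norm_pos_iff.mpr hξ) 2)]
  exact fourierT_sub_bound ρ σ h2ρ h2σ hbρ hbσ ξ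

lemma map_univ_eq (μ : Measure F) (P : F →L[ℝ] E) :
    (μ.map ⇑P) Set.univ = μ Set.univ := by
  rw [Measure.map_apply P.continuous.measurable MeasurableSet.univ, Set.preimage_univ]

lemma measurable_subc (c : F) : Measurable fun x : F => x - c := by fun_prop

lemma centerNorm_univ (μ : Measure F) [IsFiniteMeasure μ] (hM : 0 < μ Set.univ) :
    centerNorm μ Set.univ = 1 := by
  rw [centerNorm, Measure.smul_apply, smul_eq_mul,
    Measure.map_apply (measurable_subc _) MeasurableSet.univ,
    Set.preimage_univ, ENNReal.inv_mul_cancel hM.ne' (measure_ne_top μ _)]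

lemma centerNorm_isProb (μ : Measure F) [IsFiniteMeasure μ] (hM : 0 < μ Set.univ) :
    IsProbabilityMeasure (centerNorm μ) := ⟨centerNorm_univ μ hM⟩

lemma integral_id_eq (μ : Measure F) [IsFiniteMeasure μ] :
    (∫ x, x ∂μ) = (μ Set.univ).toReal • bary μ := by
  rcases eq_or_ne ((μ Set.univ).toReal) 0 with h | h
  · have h0 : μ = 0 := by
      rcases (ENNReal.toReal_eq_zero_iff _).mp h with h' | h'
      · exact Measure.measure_univ_eq_zero.mp h'
      · exact absurd h' (measure_ne_top μ _)
    rw [h, zero_smul, h0, integral_zero_measure]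
  · rw [bary, smul_smul, mul_inv_cancel₀ h, one_smul]

lemma integral_centerNorm_id (μ : Measure F) [IsFiniteMeasure μ]
    (h2 : Integrable (fun x => ‖x‖ ^ 2) μ) : (∫ x, x ∂(centerNorm μ)) = 0 := by
  have hid : Integrable (fun x : F => x) μ := integrable_id_of_sq h2
  have hsm : AEStronglyMeasurable (fun x : F => x) (μ.map (fun x => x - bary μ)) :=
    aestronglyMeasurable_id
  rw [centerNorm, integral_smul_measure,
    integral_map (measurable_subc _).aemeasurable hsm]
  rw [integral_sub hid (integrable_const _), integral_const, integral_id_eq, measureReal_def, sub_self, smul_zero]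

lemma integrable_sq_centerNorm (μ : Measure F) [IsFiniteMeasure μ] (hM : 0 < μ Set.univ)
    (h2 : Integrable (fun x => ‖x‖ ^ 2) μ) :
    Integrable (fun x => ‖x‖ ^ 2) (centerNorm μ) := by
  rw [centerNorm]
  refine Integrable.smul_measure ?_ (ENNReal.inv_ne_top.mpr hM.ne')
  have hsm : AEStronglyMeasurable (fun x : F => ‖x‖ ^ 2) (μ.map (fun x => x - bary μ)) :=
    (continuous_norm.pow 2).aestronglyMeasurable
  rw [integrable_map_measure hsm (measurable_subc _).aemeasurable]
  refine Integrable.mono' (g := fun x => 2 * ‖x‖ ^ 2 + 2 * ‖bary μ‖ ^ 2)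
    ((h2.const_mul 2).add (integrable_const _))
    ((continuous_id.sub continuous_const).norm.pow 2).aestronglyMeasurable
    (Filter.Eventually.of_forall fun x => ?_)
  have h1 : ‖x - bary μ‖ ≤ ‖x‖ + ‖bary μ‖ := norm_sub_le _ _
  have h2' : ‖x - bary μ‖ ≥ 0 := norm_nonneg _
  simp only [Function.comp_apply, Real.norm_eq_abs]
  rw [_root_.abs_of_nonneg (by positivity)]
  nlinarith [norm_nonneg x, norm_nonneg (bary μ), sq_nonneg (‖x‖ - ‖bary μ‖)]

lemma bary_map (μ : Measure F) [IsFiniteMeasure μ] (P : F →L[ℝ] E)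
    (hid : Integrable (fun x : F => x) μ) : bary (μ.map ⇑P) = P (bary μ) := by
  have hsm : AEStronglyMeasurable (fun x : E => x) (μ.map ⇑P) := aestronglyMeasurable_id
  rw [bary, bary, map_univ_eq,
    integral_map P.continuous.measurable.aemeasurable hsm,
    P.integral_comp_comm hid, P.map_smul]

lemma integral_id_map (ρ : Measure F) (P : F →L[ℝ] E)
    (hid : Integrable (fun x : F => x) ρ) :
    (∫ x, x ∂(ρ.map ⇑P)) = P (∫ x, x ∂ρ) := by
  have hsm : AEStronglyMeasurable (fun x : E => x) (ρ.map ⇑P) := aestronglyMeasurable_id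
  rw [integral_map P.continuous.measurable.aemeasurable hsm, P.integral_comp_comm hid]

lemma centerNorm_map (μ : Measure F) [IsFiniteMeasure μ] (P : F →L[ℝ] E)
    (hid : Integrable (fun x : F => x) μ) :
    centerNorm (μ.map ⇑P) = (centerNorm μ).map ⇑P := by
  rw [centerNorm, centerNorm, map_univ_eq, bary_map μ P hid, Measure.map_smul,
    Measure.map_map (measurable_subc _) P.continuous.measurable,
    Measure.map_map P.continuous.measurable (measurable_subc _)]
  congr 1
  congr 1
  ext x
  simp

lemma fourierT_map (ρ : Measure F) [IsFiniteMeasure ρ] (K : Submodule ℝ F)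
    [K.HasOrthogonalProjection] (ξ : K) :
    fourierT (ρ.map fun x => Submodule.orthogonalProjectionOnto K x) ξ = fourierT ρ (ξ : F) := by
  have hcont : Continuous (fun y : K => Complex.exp (-Complex.I * ((inner ℝ y ξ : ℝ) : ℂ))) :=
    Complex.continuous_exp.comp (continuous_const.mul (Complex.continuous_ofReal.comp
      (continuous_id.inner continuous_const)))
  rw [fourierT, fourierT,
    integral_map (Submodule.orthogonalProjectionOnto K).continuous.measurable.aemeasurable
      hcont.aestronglyMeasurable]
  congr 1
  ext x
  congr 2
  have horth : (inner ℝ (ξ : F) (x - (Submodule.orthogonalProjectionOnto K x : F)) : ℝ) = 0 :=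
    (Submodule.mem_orthogonal _ _).mp (Submodule.sub_starProjection_mem_orthogonal x) _ ξ.2
  have : (inner ℝ (Submodule.orthogonalProjectionOnto K x) ξ : ℝ)
      = (inner ℝ ((Submodule.orthogonalProjectionOnto K x : F)) (ξ : F) : ℝ) := rfl
  rw [this]
  have hsub : (inner ℝ (ξ:F) (x - (Submodule.orthogonalProjectionOnto K x : F)) : ℝ)
      = inner ℝ (ξ:F) x - inner ℝ (ξ:F) ((Submodule.orthogonalProjectionOnto K x : F)) := inner_sub_right _ _ _
  rw [hsub] at horth
  norm_cast
  linarith [real_inner_comm ((Submodule.orthogonalProjectionOnto K x : F)) (ξ:F),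
    real_inner_comm x (ξ:F), horth]

lemma norm_orthProj_le (K : Submodule ℝ F) [K.HasOrthogonalProjection] (x : F) :
    ‖Submodule.orthogonalProjectionOnto K x‖ ≤ ‖x‖ := by
  calc ‖Submodule.orthogonalProjectionOnto K x‖ ≤ ‖Submodule.orthogonalProjectionOnto K‖ * ‖x‖ :=
        (Submodule.orthogonalProjectionOnto K).le_opNorm x
    _ ≤ 1 * ‖x‖ := by gcongr; exact Submodule.orthogonalProjection_norm_le K
    _ = ‖x‖ := one_mul _

lemma integrable_sq_map_proj (ρ : Measure F) (K : Submodule ℝ F) [K.HasOrthogonalProjection]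
    (h2 : Integrable (fun x => ‖x‖ ^ 2) ρ) :
    Integrable (fun x => ‖x‖ ^ 2) (ρ.map fun x => Submodule.orthogonalProjectionOnto K x) := by
  have hsm : AEStronglyMeasurable (fun x : K => ‖x‖ ^ 2)
      (ρ.map fun x => Submodule.orthogonalProjectionOnto K x) := (continuous_norm.pow 2).aestronglyMeasurable
  rw [integrable_map_measure hsm (Submodule.orthogonalProjectionOnto K).continuous.measurable.aemeasurable]
  refine Integrable.mono' h2
    (((Submodule.orthogonalProjectionOnto K).continuous.norm.pow 2).aestronglyMeasurable)
    (Filter.Eventually.of_forall fun x => ?_)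
  have h1 := norm_orthProj_le K x
  simp only [Function.comp_apply, Real.norm_eq_abs]
  rw [_root_.abs_of_nonneg (by positivity)]
  nlinarith [norm_nonneg (Submodule.orthogonalProjectionOnto K x), norm_nonneg x]

lemma exists_submodule_finrank {m : ℕ} {V : Type*} [NormedAddCommGroup V] [NormedSpace ℝ V]
    [FiniteDimensional ℝ V] (h : m ≤ finrank ℝ V) : ∃ W : Submodule ℝ V, finrank ℝ W = m := by
  classical
  let b := finBasis ℝ V
  refine ⟨Submodule.span ℝ (Set.range (b ∘ Fin.castLE h)), ?_⟩
  rw [finrank_span_eq_card (b.linearIndependent.comp _ (Fin.castLE_injective h))]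
  simp

end Lemmas

set_option maxHeartbeats 2000000 in
/-- Bi-Lipschitz stability of the `k`-plane transform in the generalized Fourier
metric: `(1/2) d̃₂(μ,ν) ≤ D(Pμ,Pν) ≤ d̃₂(μ,ν)`, where
`D(Pμ,Pν) = sup_α d̃₂(P_α μ, P_α ν)`. -/
theorem kplane_biLipschitz_fourier (d k : ℕ) (hk : 1 ≤ k) (hkd : k ≤ d - 1)
    (μ ν : Measure (EuclideanSpace ℝ (Fin d)))
    [IsFiniteMeasure μ] [IsFiniteMeasure ν]
    (hMμ : 0 < μ Set.univ) (hMν : 0 < ν Set.univ)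
    (h2μ : Integrable (fun x => ‖x‖ ^ 2) μ) (h2ν : Integrable (fun x => ‖x‖ ^ 2) ν) :
    (1 / 2 : ℝ) * fourierDistTilde2 μ ν ≤
        (⨆ α : {α : Submodule ℝ (EuclideanSpace ℝ (Fin d)) // Module.finrank ℝ α = k},
          fourierDistTilde2
            (μ.map (fun x => Submodule.orthogonalProjectionOnto (α : Submodule ℝ (EuclideanSpace ℝ (Fin d)))ᗮ x))
            (ν.map (fun x => Submodule.orthogonalProjectionOnto (α : Submodule ℝ (EuclideanSpace ℝ (Fin d)))ᗮ x)))
    ∧ (⨆ α : {α : Submodule ℝ (EuclideanSpace ℝ (Fin d)) // Module.finrank ℝ α = k},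
          fourierDistTilde2
            (μ.map (fun x => Submodule.orthogonalProjectionOnto (α : Submodule ℝ (EuclideanSpace ℝ (Fin d)))ᗮ x))
            (ν.map (fun x => Submodule.orthogonalProjectionOnto (α : Submodule ℝ (EuclideanSpace ℝ (Fin d)))ᗮ x)))
        ≤ fourierDistTilde2 μ ν := by
  classical
  have hd : k < d := by omega
  have hfr : Module.finrank ℝ (EuclideanSpace ℝ (Fin d)) = d := finrank_euclideanSpace_fin
  haveI hPμ : IsProbabilityMeasure (centerNorm μ) := centerNorm_isProb μ hMμ
  haveI hPν : IsProbabilityMeasure (centerNorm ν) := centerNorm_isProb ν hMν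
  have hm2μ : Integrable (fun x => ‖x‖ ^ 2) (centerNorm μ) := integrable_sq_centerNorm μ hMμ h2μ
  have hm2ν : Integrable (fun x => ‖x‖ ^ 2) (centerNorm ν) := integrable_sq_centerNorm ν hMν h2ν
  have hb0μ : (∫ x, x ∂(centerNorm μ)) = 0 := integral_centerNorm_id μ h2μ
  have hb0ν : (∫ x, x ∂(centerNorm ν)) = 0 := integral_centerNorm_id ν h2ν
  have hidμ : Integrable (fun x : EuclideanSpace ℝ (Fin d) => x) μ := integrable_id_of_sq h2μ
  have hidν : Integrable (fun x : EuclideanSpace ℝ (Fin d) => x) ν := integrable_id_of_sq h2ν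
  have hidcμ : Integrable (fun x : EuclideanSpace ℝ (Fin d) => x) (centerNorm μ) :=
    integrable_id_of_sq hm2μ
  have hidcν : Integrable (fun x : EuclideanSpace ℝ (Fin d) => x) (centerNorm ν) :=
    integrable_id_of_sq hm2ν
  set q : EuclideanSpace ℝ (Fin d) → ℝ :=
    fun ξ => ‖fourierT (centerNorm μ) ξ - fourierT (centerNorm ν) ξ‖ / ‖ξ‖ ^ 2 with hq
  set BB : ℝ := 3 * (∫ x, ‖x‖ ^ 2 ∂(centerNorm μ)) + 3 * (∫ x, ‖x‖ ^ 2 ∂(centerNorm ν)) with hBB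
  have hqle : ∀ ξ : EuclideanSpace ℝ (Fin d), ξ ≠ 0 → q ξ ≤ BB :=
    fun ξ hξ => fquot_le _ _ hm2μ hm2ν hb0μ hb0ν ξ hξ
  have hAdef : fourierDist2 (centerNorm μ) (centerNorm ν)
      = ⨆ ξ : {ξ : EuclideanSpace ℝ (Fin d) // ξ ≠ 0}, q ↑ξ := rfl
  have hAbdd : BddAbove (Set.range fun ξ : {ξ : EuclideanSpace ℝ (Fin d) // ξ ≠ 0} => q ↑ξ) := by
    refine ⟨BB, ?_⟩; rintro x ⟨ξ, rfl⟩; exact hqle ξ ξ.2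
  have hA0 : 0 ≤ fourierDist2 (centerNorm μ) (centerNorm ν) := by
    rw [hAdef]; exact Real.iSup_nonneg fun ξ => by positivity
  haveI hι : Nonempty {α : Submodule ℝ (EuclideanSpace ℝ (Fin d)) // Module.finrank ℝ α = k} := by
    obtain ⟨W, hW⟩ := exists_submodule_finrank (m := k) (V := EuclideanSpace ℝ (Fin d))
      (by rw [hfr]; omega)
    exact ⟨⟨W, hW⟩⟩
  have hKbot : ∀ W : Submodule ℝ (EuclideanSpace ℝ (Fin d)),
      Module.finrank ℝ W = k → Wᗮ ≠ ⊥ := by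
    intro W hWk hbot
    have h2 := Submodule.finrank_add_finrank_orthogonal (K := W)
    rw [hWk, hbot, finrank_bot, hfr] at h2
    omega
  have hexα : ∀ ξ : EuclideanSpace ℝ (Fin d), ξ ≠ 0 →
      ∃ W : Submodule ℝ (EuclideanSpace ℝ (Fin d)), Module.finrank ℝ W = k ∧ ξ ∈ Wᗮ := by
    intro ξ hξ
    have h1 : Module.finrank ℝ (Submodule.span ℝ {ξ} : Submodule ℝ _) = 1 :=
      finrank_span_singleton hξ
    have h2 := Submodule.finrank_add_finrank_orthogonal (K := Submodule.span ℝ {ξ})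
    rw [h1, hfr] at h2
    have hk' : k ≤ Module.finrank ℝ (Submodule.span ℝ {ξ} : Submodule ℝ _)ᗮ := by omega
    obtain ⟨α', hα'⟩ := exists_submodule_finrank (V := (Submodule.span ℝ {ξ} : Submodule ℝ _)ᗮ) hk'
    refine ⟨α'.map (Submodule.span ℝ {ξ} : Submodule ℝ _)ᗮ.subtype, ?_, ?_⟩
    · rw [Submodule.finrank_map_subtype_eq]; exact hα'
    · have hle : α'.map (Submodule.span ℝ {ξ} : Submodule ℝ _)ᗮ.subtype
          ≤ (Submodule.span ℝ {ξ} : Submodule ℝ _)ᗮ := Submodule.map_subtype_le _ _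
      exact Submodule.orthogonal_le hle
        (Submodule.le_orthogonal_orthogonal _ (Submodule.mem_span_singleton_self ξ))
  -- the key per-subspace facts
  have hKey : ∀ K : Submodule ℝ (EuclideanSpace ℝ (Fin d)), K ≠ ⊥ →
      (fourierDist2 (centerNorm (μ.map fun x => Submodule.orthogonalProjectionOnto K x))
          (centerNorm (ν.map fun x => Submodule.orthogonalProjectionOnto K x))
        ≤ fourierDist2 (centerNorm μ) (centerNorm ν))
      ∧ (∀ ξ : EuclideanSpace ℝ (Fin d), ξ ≠ 0 → ξ ∈ K →
          q ξ ≤ fourierDist2 (centerNorm (μ.map fun x => Submodule.orthogonalProjectionOnto K x))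
            (centerNorm (ν.map fun x => Submodule.orthogonalProjectionOnto K x)))
      ∧ (‖bary (μ.map fun x => Submodule.orthogonalProjectionOnto K x)
            - bary (ν.map fun x => Submodule.orthogonalProjectionOnto K x)‖ ≤ ‖bary μ - bary ν‖)
      ∧ (bary μ - bary ν ∈ K →
          ‖bary (μ.map fun x => Submodule.orthogonalProjectionOnto K x)
            - bary (ν.map fun x => Submodule.orthogonalProjectionOnto K x)‖ = ‖bary μ - bary ν‖)
      ∧ ((μ.map fun x => Submodule.orthogonalProjectionOnto K x) Set.univ = μ Set.univ)
      ∧ ((ν.map fun x => Submodule.orthogonalProjectionOnto K x) Set.univ = ν Set.univ)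
      ∧ (0 ≤ fourierDist2 (centerNorm (μ.map fun x => Submodule.orthogonalProjectionOnto K x))
          (centerNorm (ν.map fun x => Submodule.orthogonalProjectionOnto K x))) := by
    intro K hK
    haveI hne : Nonempty {ξ' : ↥K // ξ' ≠ 0} := by
      haveI : Nontrivial ↥K := Submodule.nontrivial_iff_ne_bot.mpr hK
      obtain ⟨x, hx⟩ := exists_ne (0 : ↥K)
      exact ⟨⟨x, hx⟩⟩
    have hmassμ : (μ.map fun x => Submodule.orthogonalProjectionOnto K x) Set.univ = μ Set.univ :=
      map_univ_eq μ (Submodule.orthogonalProjectionOnto K)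
    have hmassν : (ν.map fun x => Submodule.orthogonalProjectionOnto K x) Set.univ = ν Set.univ :=
      map_univ_eq ν (Submodule.orthogonalProjectionOnto K)
    have hcnμ : centerNorm (μ.map fun x => Submodule.orthogonalProjectionOnto K x)
        = (centerNorm μ).map fun x => Submodule.orthogonalProjectionOnto K x :=
      centerNorm_map μ (Submodule.orthogonalProjectionOnto K) hidμ
    have hcnν : centerNorm (ν.map fun x => Submodule.orthogonalProjectionOnto K x)
        = (centerNorm ν).map fun x => Submodule.orthogonalProjectionOnto K x :=
      centerNorm_map ν (Submodule.orthogonalProjectionOnto K) hidν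
    have htermμ : ∀ ξ' : ↥K,
        fourierT (centerNorm (μ.map fun x => Submodule.orthogonalProjectionOnto K x)) ξ'
          = fourierT (centerNorm μ) ↑ξ' := by
      intro ξ'
      rw [hcnμ]
      exact fourierT_map (centerNorm μ) K ξ'
    have htermν : ∀ ξ' : ↥K,
        fourierT (centerNorm (ν.map fun x => Submodule.orthogonalProjectionOnto K x)) ξ'
          = fourierT (centerNorm ν) ↑ξ' := by
      intro ξ'
      rw [hcnν]
      exact fourierT_map (centerNorm ν) K ξ'
    have hcne : ∀ ξ' : {ξ' : ↥K // ξ' ≠ 0},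
        ((↑ξ' : ↥K) : EuclideanSpace ℝ (Fin d)) ≠ 0 := by
      intro ξ' h
      exact ξ'.2 (Submodule.coe_eq_zero.mp h)
    have hd2 : fourierDist2 (centerNorm (μ.map fun x => Submodule.orthogonalProjectionOnto K x))
        (centerNorm (ν.map fun x => Submodule.orthogonalProjectionOnto K x))
        = ⨆ ξ' : {ξ' : ↥K // ξ' ≠ 0}, q ((↑ξ' : ↥K) : EuclideanSpace ℝ (Fin d)) := by
      refine iSup_congr fun ξ' => ?_
      rw [htermμ, htermν]
      rfl
    have hbddK : BddAbove (Set.range fun ξ' : {ξ' : ↥K // ξ' ≠ 0} =>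
        q ((↑ξ' : ↥K) : EuclideanSpace ℝ (Fin d))) := by
      refine ⟨BB, ?_⟩; rintro x ⟨ξ', rfl⟩; exact hqle _ (hcne ξ')
    have hbμ : bary (μ.map fun x => Submodule.orthogonalProjectionOnto K x)
        = Submodule.orthogonalProjectionOnto K (bary μ) := bary_map μ (Submodule.orthogonalProjectionOnto K) hidμ
    have hbν : bary (ν.map fun x => Submodule.orthogonalProjectionOnto K x)
        = Submodule.orthogonalProjectionOnto K (bary ν) := bary_map ν (Submodule.orthogonalProjectionOnto K) hidν
    refine ⟨?_, ?_, ?_, ?_, hmassμ, hmassν, ?_⟩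
    · rw [hd2, hAdef]
      exact ciSup_le fun ξ' => le_ciSup hAbdd ⟨_, hcne ξ'⟩
    · intro ξ hξ hmem
      rw [hd2]
      have hne0 : (⟨ξ, hmem⟩ : ↥K) ≠ 0 := by
        intro h
        exact hξ (by simpa using congrArg (Subtype.val) h)
      exact le_ciSup hbddK (⟨(⟨ξ, hmem⟩ : ↥K), hne0⟩ : {ξ' : ↥K // ξ' ≠ 0})
    · rw [hbμ, hbν, ← map_sub]
      exact norm_orthProj_le K _
    · intro hv
      rw [hbμ, hbν, ← map_sub]
      have hPv : ((Submodule.orthogonalProjectionOnto K (bary μ - bary ν)) : EuclideanSpace ℝ (Fin d))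
          = bary μ - bary ν := Submodule.starProjection_eq_self_iff.mpr hv
      calc ‖Submodule.orthogonalProjectionOnto K (bary μ - bary ν)‖
          = ‖((Submodule.orthogonalProjectionOnto K (bary μ - bary ν)) : EuclideanSpace ℝ (Fin d))‖ := rfl
        _ = ‖bary μ - bary ν‖ := by rw [hPv]
    · rw [hd2]
      exact Real.iSup_nonneg fun ξ' => by positivity
  -- upper bound, pointwise in α
  have hupper : ∀ α : {α : Submodule ℝ (EuclideanSpace ℝ (Fin d)) // Module.finrank ℝ α = k},
      fourierDistTilde2
        (μ.map (fun x => Submodule.orthogonalProjectionOnto (α : Submodule ℝ (EuclideanSpace ℝ (Fin d)))ᗮ x))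
        (ν.map (fun x => Submodule.orthogonalProjectionOnto (α : Submodule ℝ (EuclideanSpace ℝ (Fin d)))ᗮ x))
      ≤ fourierDistTilde2 μ ν := by
    intro α
    obtain ⟨h1, h2, h3, h4, h5, h6, h7⟩ :=
      hKey (α : Submodule ℝ (EuclideanSpace ℝ (Fin d)))ᗮ (hKbot _ α.2)
    rw [fourierDistTilde2, fourierDistTilde2, h5, h6]
    exact add_le_add (add_le_add h1 h3) le_rfl
  have hgbdd : BddAbove (Set.range
      fun α : {α : Submodule ℝ (EuclideanSpace ℝ (Fin d)) // Module.finrank ℝ α = k} =>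
      fourierDistTilde2
        (μ.map (fun x => Submodule.orthogonalProjectionOnto (α : Submodule ℝ (EuclideanSpace ℝ (Fin d)))ᗮ x))
        (ν.map (fun x => Submodule.orthogonalProjectionOnto (α : Submodule ℝ (EuclideanSpace ℝ (Fin d)))ᗮ x))) := by
    refine ⟨fourierDistTilde2 μ ν, ?_⟩; rintro x ⟨α, rfl⟩; exact hupper α
  set S := ⨆ α : {α : Submodule ℝ (EuclideanSpace ℝ (Fin d)) // Module.finrank ℝ α = k},
      fourierDistTilde2
        (μ.map (fun x => Submodule.orthogonalProjectionOnto (α : Submodule ℝ (EuclideanSpace ℝ (Fin d)))ᗮ x))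
        (ν.map (fun x => Submodule.orthogonalProjectionOnto (α : Submodule ℝ (EuclideanSpace ℝ (Fin d)))ᗮ x))
    with hSdef
  have hCle : ∀ α : {α : Submodule ℝ (EuclideanSpace ℝ (Fin d)) // Module.finrank ℝ α = k},
      |(μ Set.univ).toReal - (ν Set.univ).toReal| ≤
      fourierDistTilde2
        (μ.map (fun x => Submodule.orthogonalProjectionOnto (α : Submodule ℝ (EuclideanSpace ℝ (Fin d)))ᗮ x))
        (ν.map (fun x => Submodule.orthogonalProjectionOnto (α : Submodule ℝ (EuclideanSpace ℝ (Fin d)))ᗮ x)) := by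
    intro α
    obtain ⟨h1, h2, h3, h4, h5, h6, h7⟩ :=
      hKey (α : Submodule ℝ (EuclideanSpace ℝ (Fin d)))ᗮ (hKbot _ α.2)
    rw [fourierDistTilde2, h5, h6]
    have := norm_nonneg (bary (μ.map fun x =>
        Submodule.orthogonalProjectionOnto (α : Submodule ℝ (EuclideanSpace ℝ (Fin d)))ᗮ x)
      - bary (ν.map fun x =>
        Submodule.orthogonalProjectionOnto (α : Submodule ℝ (EuclideanSpace ℝ (Fin d)))ᗮ x))
    linarith
  have hCS : |(μ Set.univ).toReal - (ν Set.univ).toReal| ≤ S := by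
    obtain ⟨α₀⟩ := hι
    exact (hCle α₀).trans (le_ciSup hgbdd α₀)
  have hBC : ‖bary μ - bary ν‖ + |(μ Set.univ).toReal - (ν Set.univ).toReal| ≤ S := by
    rcases eq_or_ne (bary μ - bary ν) 0 with hv | hv
    · rw [hv, norm_zero, zero_add]; exact hCS
    · obtain ⟨W, hWk, hWmem⟩ := hexα _ hv
      obtain ⟨h1, h2, h3, h4, h5, h6, h7⟩ := hKey Wᗮ (hKbot W hWk)
      have hle3 : fourierDistTilde2 (μ.map fun x => Submodule.orthogonalProjectionOnto Wᗮ x)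
          (ν.map fun x => Submodule.orthogonalProjectionOnto Wᗮ x) ≤ S :=
        le_ciSup hgbdd (⟨W, hWk⟩ : {α : Submodule ℝ (EuclideanSpace ℝ (Fin d)) //
          Module.finrank ℝ α = k})
      have heq : fourierDistTilde2 (μ.map fun x => Submodule.orthogonalProjectionOnto Wᗮ x)
          (ν.map fun x => Submodule.orthogonalProjectionOnto Wᗮ x)
          = fourierDist2 (centerNorm (μ.map fun x => Submodule.orthogonalProjectionOnto Wᗮ x))
              (centerNorm (ν.map fun x => Submodule.orthogonalProjectionOnto Wᗮ x))
            + ‖bary μ - bary ν‖ + |(μ Set.univ).toReal - (ν Set.univ).toReal| := by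
        rw [fourierDistTilde2, h5, h6, h4 hWmem]
      linarith
  have hAC : fourierDist2 (centerNorm μ) (centerNorm ν)
      + |(μ Set.univ).toReal - (ν Set.univ).toReal| ≤ S := by
    have hq' : ∀ ξ : {ξ : EuclideanSpace ℝ (Fin d) // ξ ≠ 0},
        q ↑ξ ≤ S - |(μ Set.univ).toReal - (ν Set.univ).toReal| := by
      intro ξ
      obtain ⟨W, hWk, hWmem⟩ := hexα ↑ξ ξ.2
      obtain ⟨h1, h2, h3, h4, h5, h6, h7⟩ := hKey Wᗮ (hKbot W hWk)
      have hle1 := h2 ↑ξ ξ.2 hWmem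
      have hle3 : fourierDistTilde2 (μ.map fun x => Submodule.orthogonalProjectionOnto Wᗮ x)
          (ν.map fun x => Submodule.orthogonalProjectionOnto Wᗮ x) ≤ S :=
        le_ciSup hgbdd (⟨W, hWk⟩ : {α : Submodule ℝ (EuclideanSpace ℝ (Fin d)) //
          Module.finrank ℝ α = k})
      have hle2 : fourierDist2 (centerNorm (μ.map fun x => Submodule.orthogonalProjectionOnto Wᗮ x))
            (centerNorm (ν.map fun x => Submodule.orthogonalProjectionOnto Wᗮ x))
          + |(μ Set.univ).toReal - (ν Set.univ).toReal|
          ≤ fourierDistTilde2 (μ.map fun x => Submodule.orthogonalProjectionOnto Wᗮ x)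
              (ν.map fun x => Submodule.orthogonalProjectionOnto Wᗮ x) := by
        rw [fourierDistTilde2, h5, h6]
        have := norm_nonneg (bary (μ.map fun x => Submodule.orthogonalProjectionOnto Wᗮ x)
          - bary (ν.map fun x => Submodule.orthogonalProjectionOnto Wᗮ x))
        linarith
      linarith
    have hA' : fourierDist2 (centerNorm μ) (centerNorm ν)
        ≤ S - |(μ Set.univ).toReal - (ν Set.univ).toReal| := by
      rw [hAdef]
      exact Real.iSup_le hq' (by linarith)
    linarith
  have hC0 : 0 ≤ |(μ Set.univ).toReal - (ν Set.univ).toReal| := abs_nonneg _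
  constructor
  · rw [fourierDistTilde2]
    linarith
  · exact ciSup_le hupper
end
end

section
/- Lower Lipschitz bound of W_2 by d_2 for equal-barycenter measures with bounded second moments: if μ, ν are probability measures on ℝ^d with equal barycenters and second moments bounded by M_2, then d_2(μ,ν) ≤ 2√(M_2) · W_2(μ,ν). -/
open MeasureTheory

noncomputable section

/-- The 2-Wasserstein distance, defined as the infimum over couplings of the root
quadratic transport cost. -/
def W2 {F : Type*} [NormedAddCommGroup F] [MeasurableSpace F] (μ ν : Measure F) : ℝ :=
  sInf {r : ℝ | ∃ π : Measure (F × F), π.map Prod.fst = μ ∧ π.map Prod.snd = ν ∧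
    r = Real.sqrt (∫ p, ‖p.1 - p.2‖ ^ 2 ∂π)}

lemma normsq_exp_neg_I (t : ℝ) :
    ‖Complex.exp (-Complex.I * t) - 1‖ ^ 2 = 2 - 2 * Real.cos t := by
  have h : -Complex.I * t = ((-t : ℝ) : ℂ) * Complex.I := by push_cast; ring
  rw [h, Complex.exp_mul_I, ← Complex.ofReal_cos, ← Complex.ofReal_sin,
    Complex.sq_norm, Complex.normSq_apply]
  simp [Real.cos_neg, Real.sin_neg, Complex.cos_ofReal_re, Complex.sin_ofReal_re]
  nlinarith [Real.sin_sq_add_cos_sq t]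

lemma lemA (t : ℝ) : ‖Complex.exp (-Complex.I * t) - 1‖ ≤ |t| := by
  have h1 := normsq_exp_neg_I t
  have h2 : 1 - t ^ 2 / 2 ≤ Real.cos t := Real.one_sub_sq_div_two_le_cos
  have h3 : ‖Complex.exp (-Complex.I * t) - 1‖ ^ 2 ≤ |t| ^ 2 := by
    rw [sq_abs]; nlinarith
  exact (pow_le_pow_iff_left₀ (norm_nonneg _) (abs_nonneg _) two_ne_zero).mp h3

lemma lemB_nonneg {t : ℝ} (ht : 0 ≤ t) :
    ‖Complex.exp (-Complex.I * t) - 1 + Complex.I * t‖ ≤ t ^ 2 / 2 := by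
  set φ : ℝ → ℂ := fun u => Complex.exp (-Complex.I * u) - 1 + Complex.I * u with hφ
  have hder : ∀ s : ℝ, HasDerivAt φ (Complex.I - Complex.I * Complex.exp (-Complex.I * s)) s := by
    intro s
    have h1 : HasDerivAt (fun z : ℂ => Complex.exp (-Complex.I * z) - 1 + Complex.I * z)
        (Complex.I - Complex.I * Complex.exp (-Complex.I * (s : ℂ))) (s : ℂ) := by
      have h2 : HasDerivAt (fun z : ℂ => -Complex.I * z) (-Complex.I) (s : ℂ) := by
        simpa using (hasDerivAt_id (s : ℂ)).const_mul (-Complex.I)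
      have h3 := h2.cexp
      have h4 : HasDerivAt (fun z : ℂ => Complex.I * z) Complex.I (s : ℂ) := by
        simpa using (hasDerivAt_id (s : ℂ)).const_mul Complex.I
      have : HasDerivAt (fun z : ℂ => Complex.exp (-Complex.I * z) - 1 + Complex.I * z) _ _ :=
        (h3.sub_const 1).add h4
      convert this using 1
      ring
    exact h1.comp_ofReal
  have hcont : Continuous fun s : ℝ => Complex.I - Complex.I * Complex.exp (-Complex.I * s) := by
    continuity
  have hint : ∀ a b : ℝ, IntervalIntegrable
      (fun s : ℝ => Complex.I - Complex.I * Complex.exp (-Complex.I * s)) volume a b :=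
    fun a b => hcont.intervalIntegrable a b
  have hftc := intervalIntegral.integral_eq_sub_of_hasDerivAt
      (fun s _ => hder s) (hint 0 t)
  have hφ0 : φ 0 = 0 := by simp [hφ]
  have heq : φ t = ∫ s in (0:ℝ)..t, (Complex.I - Complex.I * Complex.exp (-Complex.I * s)) := by
    rw [hftc, hφ0, sub_zero]
  show ‖φ t‖ ≤ t ^ 2 / 2
  rw [heq]
  have hb : ∀ s ∈ Set.uIoc (0:ℝ) t,
      ‖Complex.I - Complex.I * Complex.exp (-Complex.I * s)‖ ≤ s := by
    intro s hs
    have hs0 : 0 < s := by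
      rcases Set.mem_uIoc.mp hs with h | h
      · exact h.1
      · linarith [h.1, h.2, ht]
    calc ‖Complex.I - Complex.I * Complex.exp (-Complex.I * s)‖
        = ‖Complex.I * (1 - Complex.exp (-Complex.I * s))‖ := by ring_nf
      _ = ‖(1 : ℂ) - Complex.exp (-Complex.I * s)‖ := by
          rw [norm_mul, Complex.norm_I, one_mul]
      _ = ‖Complex.exp (-Complex.I * s) - 1‖ := by rw [norm_sub_rev]
      _ ≤ |s| := lemA s
      _ = s := abs_of_pos hs0
  have hle := intervalIntegral.norm_integral_le_abs_of_norm_le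
      (f := fun s : ℝ => Complex.I - Complex.I * Complex.exp (-Complex.I * s))
      (g := fun s : ℝ => s) (by
        filter_upwards [MeasureTheory.ae_restrict_mem measurableSet_uIoc] with s hs
        exact hb s hs)
      (continuous_id.intervalIntegrable (μ := volume) 0 t)
  calc ‖∫ s in (0:ℝ)..t, (Complex.I - Complex.I * Complex.exp (-Complex.I * s))‖
      ≤ |∫ s in (0:ℝ)..t, s| := hle
    _ = t ^ 2 / 2 := by
        rw [integral_id, show (t ^ 2 - 0 ^ 2) / 2 = t ^ 2 / 2 by ring,
          abs_of_nonneg (by positivity)]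

lemma lemB (t : ℝ) : ‖Complex.exp (-Complex.I * t) - 1 + Complex.I * t‖ ≤ t ^ 2 / 2 := by
  rcases le_or_gt 0 t with ht | ht
  · exact lemB_nonneg ht
  · have h := lemB_nonneg (t := -t) (by linarith)
    have hc : Complex.exp (-Complex.I * (-t : ℝ)) - 1 + Complex.I * (-t : ℝ) =
        (starRingEnd ℂ) (Complex.exp (-Complex.I * t) - 1 + Complex.I * t) := by
      simp [map_add, map_sub, map_mul, ← Complex.exp_conj]
      try push_cast
      try ring_nf
    rw [hc, RCLike.norm_conj] at h
    calc ‖Complex.exp (-Complex.I * t) - 1 + Complex.I * t‖ ≤ (-t) ^ 2 / 2 := h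
      _ = t ^ 2 / 2 := by ring

variable {d : ℕ}

local notation "E" => EuclideanSpace ℝ (Fin d)


set_option maxHeartbeats 1000000 in
lemma key {M2 : ℝ} (μ ν : Measure E)
    [IsProbabilityMeasure μ] [IsProbabilityMeasure ν]
    (h2μ : Integrable (fun x => ‖x‖ ^ 2) μ) (h2ν : Integrable (fun x => ‖x‖ ^ 2) ν)
    (hbary : ∫ x, x ∂μ = ∫ x, x ∂ν)
    (hM2μ : ∫ x, ‖x‖ ^ 2 ∂μ ≤ M2) (hM2ν : ∫ x, ‖x‖ ^ 2 ∂ν ≤ M2)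
    (π : Measure (E × E)) (hπ1 : π.map Prod.fst = μ) (hπ2 : π.map Prod.snd = ν) (ξ : E) :
    ‖fourierT μ ξ - fourierT ν ξ‖ ≤
      2 * Real.sqrt M2 * Real.sqrt (∫ p, ‖p.1 - p.2‖ ^ 2 ∂π) * ‖ξ‖ ^ 2 := by
  -- π is a probability measure
  haveI hπprob : IsProbabilityMeasure π := by
    constructor
    have := congrArg (fun m : Measure E => m Set.univ) hπ1
    simp only [Measure.map_apply measurable_fst MeasurableSet.univ, Set.preimage_univ] at this
    rw [this]; exact measure_univ
  -- continuity helpers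
  have hcont_a : Continuous fun p : E × E => (inner ℝ p.1 ξ : ℝ) :=
    continuous_fst.inner continuous_const
  have hcont_b : Continuous fun p : E × E => (inner ℝ p.2 ξ : ℝ) :=
    continuous_snd.inner continuous_const
  have hcont_exp : ∀ {g : E × E → ℝ}, Continuous g →
      Continuous fun p => Complex.exp (-Complex.I * (g p : ℂ)) := fun hg =>
    Complex.continuous_exp.comp ((continuous_const.mul (Complex.continuous_ofReal.comp hg)))
  -- basic integrabilities
  have hi1 : Integrable (fun p : E × E => ‖p.1‖ ^ 2) π := by
    rw [← hπ1] at h2μ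
    exact (integrable_map_measure
      ((continuous_norm.pow 2).aestronglyMeasurable) measurable_fst.aemeasurable).mp h2μ
  have hi2 : Integrable (fun p : E × E => ‖p.2‖ ^ 2) π := by
    rw [← hπ2] at h2ν
    exact (integrable_map_measure
      ((continuous_norm.pow 2).aestronglyMeasurable) measurable_snd.aemeasurable).mp h2ν
  have hicost : Integrable (fun p : E × E => ‖p.1 - p.2‖ ^ 2) π := by
    refine Integrable.mono'
      (show Integrable (fun p : E × E => 2 * ‖p.1‖ ^ 2 + 2 * ‖p.2‖ ^ 2) π from
        (hi1.const_mul 2).add (hi2.const_mul 2))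
      (((continuous_fst.sub continuous_snd).norm.pow 2).aestronglyMeasurable)
      (ae_of_all _ fun p => ?_)
    have h := norm_sub_le p.1 p.2
    have h1 := norm_nonneg p.1
    have h2 := norm_nonneg p.2
    rw [Real.norm_eq_abs, abs_of_nonneg (by positivity)]
    nlinarith [mul_self_le_mul_self (norm_nonneg (p.1 - p.2)) h, sq_nonneg (‖p.1‖ - ‖p.2‖)]
  have hintxy : Integrable (fun p : E × E => ‖p.1 - p.2‖) π := by
    refine Integrable.mono'
      (show Integrable (fun p : E × E => ‖p.1 - p.2‖ ^ 2 + 1) π from hicost.add (integrable_const 1))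
      ((continuous_fst.sub continuous_snd).norm.aestronglyMeasurable)
      (ae_of_all _ fun p => ?_)
    have h := norm_nonneg (p.1 - p.2)
    rw [Real.norm_eq_abs, abs_of_nonneg h]
    nlinarith
  have hprod : Integrable (fun p : E × E => ‖p.2‖ * ‖p.1 - p.2‖) π := by
    refine Integrable.mono'
      (show Integrable (fun p : E × E => ‖p.2‖ ^ 2 + ‖p.1 - p.2‖ ^ 2) π from hi2.add hicost)
      ((continuous_snd.norm.mul (continuous_fst.sub continuous_snd).norm).aestronglyMeasurable)
      (ae_of_all _ fun p => ?_)
    have h1 := norm_nonneg p.2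
    have h2 := norm_nonneg (p.1 - p.2)
    rw [Real.norm_eq_abs, abs_of_nonneg (by positivity)]
    nlinarith [sq_nonneg (‖p.2‖ - ‖p.1 - p.2‖)]
  -- the integrands
  set f₁ : E × E → ℂ := fun p => Complex.exp (-Complex.I * ((inner ℝ p.1 ξ : ℝ) : ℂ)) with hf₁
  set f₂ : E × E → ℂ := fun p => Complex.exp (-Complex.I * ((inner ℝ p.2 ξ : ℝ) : ℂ)) with hf₂
  have hnormf₂ : ∀ p : E × E, ‖f₂ p‖ = 1 := by
    intro p
    rw [hf₂]
    simp [Complex.norm_exp]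
  have hif1 : Integrable f₁ π := by
    refine Integrable.mono' (integrable_const 1) ((hcont_exp hcont_a).aestronglyMeasurable)
      (ae_of_all _ fun p => ?_)
    simp [hf₁, Complex.norm_exp]
  have hif2 : Integrable f₂ π := by
    refine Integrable.mono' (integrable_const 1) ((hcont_exp hcont_b).aestronglyMeasurable)
      (ae_of_all _ fun p => le_of_eq (hnormf₂ p))
  -- change of variables
  have hμf : fourierT μ ξ = ∫ p, f₁ p ∂π := by
    rw [fourierT, ← hπ1]
    exact integral_map measurable_fst.aemeasurable
      (f := fun x : E => Complex.exp (-Complex.I * ((inner ℝ x ξ : ℝ) : ℂ)))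
      ((Complex.continuous_exp.comp (continuous_const.mul
        (Complex.continuous_ofReal.comp
          ((continuous_id (X := E)).inner continuous_const)))).aestronglyMeasurable)
  have hνf : fourierT ν ξ = ∫ p, f₂ p ∂π := by
    rw [fourierT, ← hπ2]
    exact integral_map measurable_snd.aemeasurable
      (f := fun x : E => Complex.exp (-Complex.I * ((inner ℝ x ξ : ℝ) : ℂ)))
      ((Complex.continuous_exp.comp (continuous_const.mul
        (Complex.continuous_ofReal.comp
          ((continuous_id (X := E)).inner continuous_const)))).aestronglyMeasurable)
  -- the difference of inner products
  set c : E × E → ℝ := fun p => (inner ℝ p.1 ξ : ℝ) - (inner ℝ p.2 ξ : ℝ) with hc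
  have hcont_c : Continuous c := hcont_a.sub hcont_b
  have hcbound : ∀ p : E × E, |c p| ≤ ‖p.1 - p.2‖ * ‖ξ‖ := by
    intro p
    rw [hc]
    simp only
    rw [← inner_sub_left]
    exact abs_real_inner_le_norm _ _
  set g₁ : E × E → ℂ := fun p => f₂ p * (-Complex.I * ((c p : ℝ) : ℂ)) with hg₁
  set g₂ : E × E → ℂ := fun p =>
    f₂ p * (Complex.exp (-Complex.I * ((c p : ℝ) : ℂ)) - 1 + Complex.I * ((c p : ℝ) : ℂ)) with hg₂
  have hpt : ∀ p, f₁ p - f₂ p = g₁ p + g₂ p := by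
    intro p
    rw [hg₁, hg₂, hf₁, hf₂]
    simp only
    have e1 : -Complex.I * ((inner ℝ p.1 ξ : ℝ) : ℂ)
        = -Complex.I * ((inner ℝ p.2 ξ : ℝ) : ℂ) + -Complex.I * ((c p : ℝ) : ℂ) := by
      rw [hc]; push_cast; ring
    rw [e1, Complex.exp_add]; ring
  have hig1 : Integrable g₁ π := by
    refine Integrable.mono'
      (show Integrable (fun p : E × E => ‖p.1 - p.2‖ * ‖ξ‖) π from hintxy.mul_const ‖ξ‖)
      (((hcont_exp hcont_b).mul
        (continuous_const.mul (Complex.continuous_ofReal.comp hcont_c))).aestronglyMeasurable)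
      (ae_of_all _ fun p => ?_)
    rw [hg₁]
    simp only [norm_mul, hnormf₂ p, one_mul, norm_neg, Complex.norm_I, Complex.norm_real,
      Real.norm_eq_abs]
    exact hcbound p
  have hig2 : Integrable g₂ π := by
    have e : g₂ = fun p => (f₁ p - f₂ p) - g₁ p := funext fun p => by rw [hpt p]; ring
    rw [e]; exact (hif1.sub hif2).sub hig1
  have hsplit : fourierT μ ξ - fourierT ν ξ = (∫ p, g₁ p ∂π) + (∫ p, g₂ p ∂π) := by
    rw [hμf, hνf, ← integral_sub hif1 hif2, ← integral_add hig1 hig2]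
    exact integral_congr_ae (ae_of_all _ fun p => hpt p)
  set C : ℝ := ∫ p, ‖p.1 - p.2‖ ^ 2 ∂π with hCdef
  -- bound on the remainder term
  have hg2b : ‖∫ p, g₂ p ∂π‖ ≤ ‖ξ‖ ^ 2 / 2 * C := by
    calc ‖∫ p, g₂ p ∂π‖ ≤ ∫ p, ‖ξ‖ ^ 2 / 2 * ‖p.1 - p.2‖ ^ 2 ∂π := by
          refine norm_integral_le_of_norm_le (hicost.const_mul _) (ae_of_all _ fun p => ?_)
          rw [hg₂]
          simp only [norm_mul, hnormf₂ p, one_mul]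
          calc ‖Complex.exp (-Complex.I * ((c p : ℝ) : ℂ)) - 1 + Complex.I * ((c p : ℝ) : ℂ)‖
              ≤ (c p) ^ 2 / 2 := lemB (c p)
            _ ≤ ‖ξ‖ ^ 2 / 2 * ‖p.1 - p.2‖ ^ 2 := by
                rw [← sq_abs (c p)]
                calc |c p| ^ 2 / 2 ≤ (‖p.1 - p.2‖ * ‖ξ‖) ^ 2 / 2 := by
                      have := pow_le_pow_left₀ (abs_nonneg (c p)) (hcbound p) 2
                      linarith
                  _ = ‖ξ‖ ^ 2 / 2 * ‖p.1 - p.2‖ ^ 2 := by ring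
      _ = ‖ξ‖ ^ 2 / 2 * C := by rw [integral_const_mul]
  -- the linear term
  set k₁ : E × E → ℂ := fun p => (f₂ p - 1) * ((c p : ℝ) : ℂ) with hk₁
  have hk₁b : ∀ p : E × E, ‖k₁ p‖ ≤ ‖ξ‖ ^ 2 * (‖p.2‖ * ‖p.1 - p.2‖) := by
    intro p
    rw [hk₁]
    simp only [norm_mul, Complex.norm_real, Real.norm_eq_abs]
    have h1 : ‖f₂ p - 1‖ ≤ ‖p.2‖ * ‖ξ‖ := by
      rw [hf₂]
      simp only
      exact le_trans (lemA _) (abs_real_inner_le_norm _ _)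
    have h2 := hcbound p
    calc ‖f₂ p - 1‖ * |c p| ≤ (‖p.2‖ * ‖ξ‖) * (‖p.1 - p.2‖ * ‖ξ‖) :=
          mul_le_mul h1 h2 (abs_nonneg _) (by positivity)
      _ = ‖ξ‖ ^ 2 * (‖p.2‖ * ‖p.1 - p.2‖) := by ring
  have hik1 : Integrable k₁ π := by
    refine Integrable.mono'
      (show Integrable (fun p : E × E => ‖ξ‖ ^ 2 * (‖p.2‖ * ‖p.1 - p.2‖)) π from
        hprod.const_mul _)
      ((((hcont_exp hcont_b).sub continuous_const).mul
        (Complex.continuous_ofReal.comp hcont_c)).aestronglyMeasurable)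
      (ae_of_all _ fun p => hk₁b p)
  have hia : Integrable (fun p : E × E => (inner ℝ p.1 ξ : ℝ)) π := by
    refine Integrable.mono'
      (show Integrable (fun p : E × E => (‖p.1‖ ^ 2 + 1) * ‖ξ‖) π from
        (hi1.add (integrable_const 1)).mul_const _)
      hcont_a.aestronglyMeasurable (ae_of_all _ fun p => ?_)
    rw [Real.norm_eq_abs]
    have h := abs_real_inner_le_norm p.1 ξ
    nlinarith [norm_nonneg p.1, norm_nonneg ξ, sq_nonneg (‖p.1‖ - 1)]
  have hib : Integrable (fun p : E × E => (inner ℝ p.2 ξ : ℝ)) π := by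
    refine Integrable.mono'
      (show Integrable (fun p : E × E => (‖p.2‖ ^ 2 + 1) * ‖ξ‖) π from
        (hi2.add (integrable_const 1)).mul_const _)
      hcont_b.aestronglyMeasurable (ae_of_all _ fun p => ?_)
    rw [Real.norm_eq_abs]
    have h := abs_real_inner_le_norm p.2 ξ
    nlinarith [norm_nonneg p.2, norm_nonneg ξ, sq_nonneg (‖p.2‖ - 1)]
  have hic : Integrable c π := by
    rw [hc]; exact hia.sub hib
  have hintidμ : Integrable (fun x : E => x) μ := by
    refine Integrable.mono'
      (show Integrable (fun x : E => ‖x‖ ^ 2 + 1) μ from h2μ.add (integrable_const 1))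
      continuous_id.aestronglyMeasurable (ae_of_all _ fun x => ?_)
    nlinarith [norm_nonneg x, sq_nonneg (‖x‖ - 1)]
  have hintidν : Integrable (fun x : E => x) ν := by
    refine Integrable.mono'
      (show Integrable (fun x : E => ‖x‖ ^ 2 + 1) ν from h2ν.add (integrable_const 1))
      continuous_id.aestronglyMeasurable (ae_of_all _ fun x => ?_)
    nlinarith [norm_nonneg x, sq_nonneg (‖x‖ - 1)]
  have hpia : ∫ p, (inner ℝ p.1 ξ : ℝ) ∂π = (inner ℝ (∫ x, x ∂μ) ξ : ℝ) := by
    have h' : ∫ x, (inner ℝ x ξ : ℝ) ∂(π.map Prod.fst) = ∫ p, (inner ℝ p.1 ξ : ℝ) ∂π :=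
      integral_map measurable_fst.aemeasurable (f := fun x : E => (inner ℝ x ξ : ℝ))
        (((continuous_id (X := E)).inner continuous_const).aestronglyMeasurable)
    rw [hπ1] at h'
    rw [← h', real_inner_comm ξ (∫ x, x ∂μ), ← integral_inner hintidμ ξ]
    exact integral_congr_ae (ae_of_all _ fun x => real_inner_comm ξ x)
  have hpib : ∫ p, (inner ℝ p.2 ξ : ℝ) ∂π = (inner ℝ (∫ x, x ∂ν) ξ : ℝ) := by
    have h' : ∫ x, (inner ℝ x ξ : ℝ) ∂(π.map Prod.snd) = ∫ p, (inner ℝ p.2 ξ : ℝ) ∂π :=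
      integral_map measurable_snd.aemeasurable (f := fun x : E => (inner ℝ x ξ : ℝ))
        (((continuous_id (X := E)).inner continuous_const).aestronglyMeasurable)
    rw [hπ2] at h'
    rw [← h', real_inner_comm ξ (∫ x, x ∂ν), ← integral_inner hintidν ξ]
    exact integral_congr_ae (ae_of_all _ fun x => real_inner_comm ξ x)
  have hczero : ∫ p, c p ∂π = 0 := by
    rw [hc]
    rw [integral_sub hia hib, hpia, hpib, hbary, sub_self]
  have hg1eq : ∫ p, g₁ p ∂π = -Complex.I * (∫ p, k₁ p ∂π) := by
    have e : g₁ = fun p => -Complex.I * (k₁ p + ((c p : ℝ) : ℂ)) := funext fun p => by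
      rw [hg₁, hk₁]; simp only; ring
    have hicC : Integrable (fun p : E × E => ((c p : ℝ) : ℂ)) π := hic.ofReal
    have hoR : ∫ p, ((c p : ℝ) : ℂ) ∂π = ((∫ p, c p ∂π : ℝ) : ℂ) := integral_ofReal
    rw [e, integral_const_mul, integral_add hik1 hicC, hoR, hczero]
    simp
  -- Cauchy–Schwarz
  have hCS : ∫ p, ‖p.2‖ * ‖p.1 - p.2‖ ∂π ≤ Real.sqrt (∫ p, ‖p.2‖ ^ 2 ∂π) * Real.sqrt C := by
    have hpq : Real.HolderConjugate 2 2 := ⟨by norm_num, by norm_num, by norm_num⟩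
    have hm1 : MemLp (fun p : E × E => ‖p.2‖) (ENNReal.ofReal 2) π := by
      rw [ENNReal.ofReal_ofNat]
      exact (memLp_two_iff_integrable_sq continuous_snd.norm.aestronglyMeasurable).mpr hi2
    have hm2 : MemLp (fun p : E × E => ‖p.1 - p.2‖) (ENNReal.ofReal 2) π := by
      rw [ENNReal.ofReal_ofNat]
      exact (memLp_two_iff_integrable_sq
        ((continuous_fst.sub continuous_snd).norm.aestronglyMeasurable)).mpr hicost
    have h := integral_mul_le_Lp_mul_Lq_of_nonneg (μ := π) (f := fun p : E × E => ‖p.2‖)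
      (g := fun p : E × E => ‖p.1 - p.2‖) hpq
      (ae_of_all _ fun p : E × E => norm_nonneg p.2)
      (ae_of_all _ fun p : E × E => norm_nonneg (p.1 - p.2)) hm1 hm2
    simp_rw [Real.rpow_two] at h
    rw [Real.sqrt_eq_rpow, Real.sqrt_eq_rpow]
    exact h
  have hg1b : ‖∫ p, g₁ p ∂π‖ ≤
      ‖ξ‖ ^ 2 * (Real.sqrt (∫ p, ‖p.2‖ ^ 2 ∂π) * Real.sqrt C) := by
    rw [hg1eq, norm_mul, norm_neg, Complex.norm_I, one_mul]
    calc ‖∫ p, k₁ p ∂π‖ ≤ ∫ p, ‖ξ‖ ^ 2 * (‖p.2‖ * ‖p.1 - p.2‖) ∂π :=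
          norm_integral_le_of_norm_le (hprod.const_mul _) (ae_of_all _ fun p => hk₁b p)
      _ = ‖ξ‖ ^ 2 * ∫ p, ‖p.2‖ * ‖p.1 - p.2‖ ∂π := integral_const_mul _ _
      _ ≤ ‖ξ‖ ^ 2 * (Real.sqrt (∫ p, ‖p.2‖ ^ 2 ∂π) * Real.sqrt C) :=
          mul_le_mul_of_nonneg_left hCS (by positivity)
  -- moments
  have hA : ∫ p, ‖p.1‖ ^ 2 ∂π = ∫ x, ‖x‖ ^ 2 ∂μ := by
    rw [← hπ1, integral_map measurable_fst.aemeasurable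
      (f := fun x : E => ‖x‖ ^ 2) ((continuous_norm.pow 2).aestronglyMeasurable)]
  have hB : ∫ p, ‖p.2‖ ^ 2 ∂π = ∫ x, ‖x‖ ^ 2 ∂ν := by
    rw [← hπ2, integral_map measurable_snd.aemeasurable
      (f := fun x : E => ‖x‖ ^ 2) ((continuous_norm.pow 2).aestronglyMeasurable)]
  have hC0 : 0 ≤ C := integral_nonneg fun p => by positivity
  have hM20 : 0 ≤ M2 := le_trans (integral_nonneg fun x => by positivity) hM2μ
  have hCle : C ≤ 4 * M2 := by
    have h1 : C ≤ ∫ p, (2 * ‖p.1‖ ^ 2 + 2 * ‖p.2‖ ^ 2) ∂π := by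
      refine integral_mono hicost ((hi1.const_mul 2).add (hi2.const_mul 2)) fun p => ?_
      have h := norm_sub_le p.1 p.2
      nlinarith [mul_self_le_mul_self (norm_nonneg (p.1 - p.2)) h, sq_nonneg (‖p.1‖ - ‖p.2‖)]
    have h2 : ∫ p, (2 * ‖p.1‖ ^ 2 + 2 * ‖p.2‖ ^ 2) ∂π
        = 2 * (∫ p, ‖p.1‖ ^ 2 ∂π) + 2 * (∫ p, ‖p.2‖ ^ 2 ∂π) := by
      rw [integral_add (hi1.const_mul 2) (hi2.const_mul 2), integral_const_mul, integral_const_mul]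
    have h3 : 0 ≤ ∫ x, ‖x‖ ^ 2 ∂μ := integral_nonneg fun x => by positivity
    rw [h2, hA, hB] at h1
    linarith
  have hsqC : Real.sqrt C ≤ 2 * Real.sqrt M2 := by
    calc Real.sqrt C ≤ Real.sqrt (4 * M2) := Real.sqrt_le_sqrt hCle
      _ = 2 * Real.sqrt M2 := by
          rw [show (4 : ℝ) * M2 = 2 ^ 2 * M2 by norm_num,
            Real.sqrt_mul (by positivity), Real.sqrt_sq (by norm_num)]
  have hBs : Real.sqrt (∫ p, ‖p.2‖ ^ 2 ∂π) ≤ Real.sqrt M2 :=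
    Real.sqrt_le_sqrt (by rw [hB]; exact hM2ν)
  -- conclusion
  rw [hsplit]
  have hCC : Real.sqrt C * Real.sqrt C = C := Real.mul_self_sqrt hC0
  have step : Real.sqrt (∫ p, ‖p.2‖ ^ 2 ∂π) * Real.sqrt C + Real.sqrt C * Real.sqrt C / 2
      ≤ 2 * Real.sqrt M2 * Real.sqrt C := by
    nlinarith [Real.sqrt_nonneg C, Real.sqrt_nonneg M2,
      Real.sqrt_nonneg (∫ p, ‖p.2‖ ^ 2 ∂π)]
  calc ‖(∫ p, g₁ p ∂π) + ∫ p, g₂ p ∂π‖ ≤ ‖∫ p, g₁ p ∂π‖ + ‖∫ p, g₂ p ∂π‖ := norm_add_le _ _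
    _ ≤ ‖ξ‖ ^ 2 * (Real.sqrt (∫ p, ‖p.2‖ ^ 2 ∂π) * Real.sqrt C) + ‖ξ‖ ^ 2 / 2 * C :=
        add_le_add hg1b hg2b
    _ = (Real.sqrt (∫ p, ‖p.2‖ ^ 2 ∂π) * Real.sqrt C + Real.sqrt C * Real.sqrt C / 2)
        * ‖ξ‖ ^ 2 := by rw [hCC]; ring
    _ ≤ (2 * Real.sqrt M2 * Real.sqrt C) * ‖ξ‖ ^ 2 :=
        mul_le_mul_of_nonneg_right step (sq_nonneg _)
    _ = 2 * Real.sqrt M2 * Real.sqrt C * ‖ξ‖ ^ 2 := by ring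

/-- Lower Lipschitz bound of `W₂` by `d₂` for probability measures with equal
barycenters and second moments bounded by `M₂`: `d₂(μ,ν) ≤ 2√M₂ · W₂(μ,ν)`. -/
theorem fourierDist2_le_W2 (d : ℕ) (M2 : ℝ)
    (μ ν : Measure (EuclideanSpace ℝ (Fin d)))
    [IsProbabilityMeasure μ] [IsProbabilityMeasure ν]
    (h2μ : Integrable (fun x => ‖x‖ ^ 2) μ) (h2ν : Integrable (fun x => ‖x‖ ^ 2) ν)
    (hbary : ∫ x, x ∂μ = ∫ x, x ∂ν)
    (hM2μ : ∫ x, ‖x‖ ^ 2 ∂μ ≤ M2) (hM2ν : ∫ x, ‖x‖ ^ 2 ∂ν ≤ M2) :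
    fourierDist2 μ ν ≤ 2 * Real.sqrt M2 * W2 μ ν := by
  have hW0 : 0 ≤ W2 μ ν := by
    apply Real.sInf_nonneg
    rintro r ⟨π, -, -, rfl⟩
    exact Real.sqrt_nonneg _
  have hM20 : 0 ≤ M2 := le_trans (integral_nonneg fun x => by positivity) hM2μ
  have hRHS : 0 ≤ 2 * Real.sqrt M2 * W2 μ ν := mul_nonneg (by positivity) hW0
  rw [fourierDist2]
  apply Real.iSup_le _ hRHS
  rintro ⟨ξ, hξ⟩
  show ‖fourierT μ ξ - fourierT ν ξ‖ / ‖ξ‖ ^ 2 ≤ 2 * Real.sqrt M2 * W2 μ ν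
  have hξ0 : 0 < ‖ξ‖ := norm_pos_iff.mpr hξ
  have hξ2 : 0 < ‖ξ‖ ^ 2 := by positivity
  rw [div_le_iff₀ hξ2]
  by_cases hM : Real.sqrt M2 = 0
  · have hM2z : M2 = 0 := le_antisymm (Real.sqrt_eq_zero'.mp hM) hM20
    have hμ0 : ∫ x, ‖x‖ ^ 2 ∂μ = 0 :=
      le_antisymm (hM2z ▸ hM2μ) (integral_nonneg fun x => by positivity)
    have hν0 : ∫ x, ‖x‖ ^ 2 ∂ν = 0 :=
      le_antisymm (hM2z ▸ hM2ν) (integral_nonneg fun x => by positivity)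
    have haeμ : ∀ᵐ x ∂μ, x = 0 := by
      have h := (integral_eq_zero_iff_of_nonneg (fun x => by positivity) h2μ).mp hμ0
      filter_upwards [h] with x hx
      have : ‖x‖ ^ 2 = 0 := hx
      simpa [pow_eq_zero_iff] using this
    have haeν : ∀ᵐ x ∂ν, x = 0 := by
      have h := (integral_eq_zero_iff_of_nonneg (fun x => by positivity) h2ν).mp hν0
      filter_upwards [h] with x hx
      have : ‖x‖ ^ 2 = 0 := hx
      simpa [pow_eq_zero_iff] using this
    have hfμ : fourierT μ ξ = 1 := by
      rw [fourierT, show (1 : ℂ) = ∫ _ : EuclideanSpace ℝ (Fin d), (1 : ℂ) ∂μ by simp]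
      apply integral_congr_ae
      filter_upwards [haeμ] with x hx
      rw [hx]
      simp
    have hfν : fourierT ν ξ = 1 := by
      rw [fourierT, show (1 : ℂ) = ∫ _ : EuclideanSpace ℝ (Fin d), (1 : ℂ) ∂ν by simp]
      apply integral_congr_ae
      filter_upwards [haeν] with x hx
      rw [hx]
      simp
    rw [hfμ, hfν, sub_self, norm_zero]
    exact mul_nonneg hRHS (le_of_lt hξ2)
  · have hMpos : 0 < Real.sqrt M2 := lt_of_le_of_ne (Real.sqrt_nonneg _) (Ne.symm hM)
    have hpos : 0 < 2 * Real.sqrt M2 * ‖ξ‖ ^ 2 := by positivity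
    set S := {r : ℝ | ∃ π : Measure (EuclideanSpace ℝ (Fin d) × EuclideanSpace ℝ (Fin d)),
      π.map Prod.fst = μ ∧ π.map Prod.snd = ν ∧
      r = Real.sqrt (∫ p, ‖p.1 - p.2‖ ^ 2 ∂π)} with hSdef
    have hSne : S.Nonempty := by
      refine ⟨_, μ.prod ν, ?_, ?_, rfl⟩
      · rw [Measure.map_fst_prod]; simp
      · rw [Measure.map_snd_prod]; simp
    have hle : ∀ r ∈ S,
        ‖fourierT μ ξ - fourierT ν ξ‖ / (2 * Real.sqrt M2 * ‖ξ‖ ^ 2) ≤ r := by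
      rintro r ⟨π, hπ1, hπ2, rfl⟩
      rw [div_le_iff₀ hpos]
      calc ‖fourierT μ ξ - fourierT ν ξ‖
          ≤ 2 * Real.sqrt M2 * Real.sqrt (∫ p, ‖p.1 - p.2‖ ^ 2 ∂π) * ‖ξ‖ ^ 2 :=
            key μ ν h2μ h2ν hbary hM2μ hM2ν π hπ1 hπ2 ξ
        _ = Real.sqrt (∫ p, ‖p.1 - p.2‖ ^ 2 ∂π) * (2 * Real.sqrt M2 * ‖ξ‖ ^ 2) := by ring
    have hsinf := le_csInf hSne hle
    rw [div_le_iff₀ hpos] at hsinf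
    have hW : W2 μ ν = sInf S := rfl
    calc ‖fourierT μ ξ - fourierT ν ξ‖ ≤ sInf S * (2 * Real.sqrt M2 * ‖ξ‖ ^ 2) := hsinf
      _ = 2 * Real.sqrt M2 * sInf S * ‖ξ‖ ^ 2 := by ring
      _ = 2 * Real.sqrt M2 * W2 μ ν * ‖ξ‖ ^ 2 := by rw [hW]
end
end
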